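/- arXiv:2107.01990 — 5 statements merged into one kernel-verified Lean document; each statement's English description precedes it below -/
import Mathlib

section
/- Let V be an n×k matrix over K with orthonormal columns, and let V', X ⊆ K^n be subspaces with dim X ≥ dim V' = j, V' ⊆ range(V), and all principal angles between X and V' strictly less than π/2. Then the subspace W = V* X ⊆ K^k satisfies dim W ≥ j, and with H' = V* V' one has θ_i(W, H') ≤ θ_i(X, V') for 1 ≤ i ≤ j. -/
open Matrix Submodule

variable {𝕜 : Type*} [RCLike 𝕜]

noncomputable def projMat {n : ℕ} (S : Submodule 𝕜 (EuclideanSpace 𝕜 (Fin n))) :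
    Matrix (Fin n) (Fin n) 𝕜 :=
  Matrix.toEuclideanLin.symm ((S.subtypeL.comp (orthogonalProjection S)).toLinearMap)

noncomputable def singVal {m n : ℕ} (M : Matrix (Fin m) (Fin n) 𝕜) (j : Fin n) : ℝ :=
  Real.sqrt ((Matrix.isHermitian_conjTranspose_mul_self M).eigenvalues
    (Tuple.sort (Matrix.isHermitian_conjTranspose_mul_self M).eigenvalues j.rev))

noncomputable def singValN {m n : ℕ} (M : Matrix (Fin m) (Fin n) 𝕜) (j : ℕ) : ℝ :=
  if h : j < n then singVal M ⟨j, h⟩ else 0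

noncomputable def specNorm {m n : ℕ} (M : Matrix (Fin m) (Fin n) 𝕜) : ℝ :=
  ‖LinearMap.toContinuousLinearMap (Matrix.toEuclideanLin M)‖

noncomputable def frobNorm {m n : ℕ} (M : Matrix (Fin m) (Fin n) 𝕜) : ℝ :=
  Real.sqrt (∑ i, ∑ j, ‖M i j‖ ^ 2)

noncomputable def principalAngle {n : ℕ} (S T : Submodule 𝕜 (EuclideanSpace 𝕜 (Fin n))) (i : ℕ) : ℝ :=
  Real.arccos (singValN (projMat S * projMat T) i)

def IsMoorePenrose {m n : ℕ} (A : Matrix (Fin m) (Fin n) 𝕜) (B : Matrix (Fin n) (Fin m) 𝕜) : Prop :=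
  A * B * A = A ∧ B * A * B = B ∧ (A * B)ᴴ = A * B ∧ (B * A)ᴴ = B * A

namespace MyCF

open Finset

local notation "⟪" x ", " y "⟫" => inner (𝕜 := 𝕜) x y

section spectral

variable {m : ℕ} {A : Matrix (Fin m) (Fin m) 𝕜} (hA : A.IsHermitian)

noncomputable def sEig (r : Fin m) : ℝ := hA.eigenvalues (Tuple.sort hA.eigenvalues r)

lemma teul_eigen (i : Fin m) :
    Matrix.toEuclideanLin A (hA.eigenvectorBasis i) =
      (hA.eigenvalues i : 𝕜) • hA.eigenvectorBasis i := by
  have h := hA.mulVec_eigenvectorBasis i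
  apply (WithLp.equiv 2 _).injective
  simpa [Matrix.toEuclideanLin_apply] using h

lemma rayleigh_expand (x : EuclideanSpace 𝕜 (Fin m)) :
    RCLike.re ⟪x, Matrix.toEuclideanLin A x⟫ =
      ∑ i, hA.eigenvalues i * ‖⟪hA.eigenvectorBasis i, x⟫‖ ^ 2 := by
  set b := hA.eigenvectorBasis with hb
  have hx : x = ∑ i, ⟪b i, x⟫ • b i := (b.sum_repr' x).symm
  have hAx : Matrix.toEuclideanLin A x = ∑ i, (⟪b i, x⟫ * (hA.eigenvalues i : 𝕜)) • b i := by
    conv_lhs => rw [hx, map_sum]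
    refine Finset.sum_congr rfl fun i _ => ?_
    rw [LinearMap.map_smul, teul_eigen hA i, smul_smul]
  have h1 : ⟪x, Matrix.toEuclideanLin A x⟫ =
      ∑ i, ((hA.eigenvalues i * ‖⟪b i, x⟫‖ ^ 2 : ℝ) : 𝕜) := by
    rw [hAx, inner_sum]
    refine Finset.sum_congr rfl fun i _ => ?_
    rw [inner_smul_right]
    have hcs : ⟪x, b i⟫ = starRingEnd 𝕜 ⟪b i, x⟫ := by rw [inner_conj_symm]
    rw [hcs]
    have : ⟪b i, x⟫ * (hA.eigenvalues i : 𝕜) * starRingEnd 𝕜 ⟪b i, x⟫ =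
        (hA.eigenvalues i : 𝕜) * (⟪b i, x⟫ * starRingEnd 𝕜 ⟪b i, x⟫) := by ring
    rw [this, RCLike.mul_conj]
    push_cast
    ring
  rw [h1, map_sum]
  exact Finset.sum_congr rfl fun i _ => by rw [RCLike.ofReal_re]

lemma parseval (x : EuclideanSpace 𝕜 (Fin m)) :
    ‖x‖ ^ 2 = ∑ i, ‖⟪hA.eigenvectorBasis i, x⟫‖ ^ 2 := by
  set b := hA.eigenvectorBasis
  have h := b.sum_inner_mul_inner x x
  have h1 : ∀ i : Fin m, ⟪x, b i⟫ * ⟪b i, x⟫ = ((‖⟪b i, x⟫‖ ^ 2 : ℝ) : 𝕜) := by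
    intro i
    have hcs : ⟪x, b i⟫ = starRingEnd 𝕜 ⟪b i, x⟫ := by rw [inner_conj_symm]
    rw [hcs, RCLike.conj_mul]; push_cast; ring
  rw [← @inner_self_eq_norm_sq 𝕜, ← h, map_sum]
  exact Finset.sum_congr rfl fun i _ => by rw [h1 i, RCLike.ofReal_re]

noncomputable def spanEig (s : Finset (Fin m)) : Submodule 𝕜 (EuclideanSpace 𝕜 (Fin m)) :=
  span 𝕜 (hA.eigenvectorBasis '' (s : Set (Fin m)))

lemma finrank_spanEig (s : Finset (Fin m)) :
    Module.finrank 𝕜 (spanEig hA s) = s.card := by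
  classical
  have hli : LinearIndependent 𝕜 (fun i : (s : Set (Fin m)) => hA.eigenvectorBasis i) :=
    (hA.eigenvectorBasis.orthonormal.linearIndependent).comp _ Subtype.val_injective
  have heq : spanEig hA s =
      span 𝕜 (Set.range fun i : (s : Set (Fin m)) => hA.eigenvectorBasis i) := by
    rw [spanEig, Set.image_eq_range]
  rw [heq, finrank_span_eq_card hli]
  simp

lemma inner_eq_zero_of_mem_spanEig {s : Finset (Fin m)} {x} (hx : x ∈ spanEig hA s)
    {i : Fin m} (hi : i ∉ s) : ⟪hA.eigenvectorBasis i, x⟫ = 0 := by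
  induction hx using span_induction with
  | mem y hy =>
    obtain ⟨l, hl, rfl⟩ := hy
    exact hA.eigenvectorBasis.orthonormal.2 (fun h => hi (by simpa [h] using hl))
  | zero => exact inner_zero_right _
  | add y z _ _ hy hz => rw [inner_add_right, hy, hz, add_zero]
  | smul c y _ hy => rw [inner_smul_right, hy, mul_zero]

lemma ray_le_of_mem {s : Finset (Fin m)} {c : ℝ} (hs : ∀ l ∈ s, hA.eigenvalues l ≤ c)
    {x} (hx : x ∈ spanEig hA s) :
    RCLike.re ⟪x, Matrix.toEuclideanLin A x⟫ ≤ c * ‖x‖ ^ 2 := by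
  rw [rayleigh_expand hA, parseval hA x, Finset.mul_sum]
  refine Finset.sum_le_sum fun i _ => ?_
  by_cases h : i ∈ s
  · exact mul_le_mul_of_nonneg_right (hs i h) (by positivity)
  · rw [inner_eq_zero_of_mem_spanEig hA hx h]; simp

lemma ray_ge_of_mem {s : Finset (Fin m)} {c : ℝ} (hs : ∀ l ∈ s, c ≤ hA.eigenvalues l)
    {x} (hx : x ∈ spanEig hA s) :
    c * ‖x‖ ^ 2 ≤ RCLike.re ⟪x, Matrix.toEuclideanLin A x⟫ := by
  rw [rayleigh_expand hA, parseval hA x, Finset.mul_sum]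
  refine Finset.sum_le_sum fun i _ => ?_
  by_cases h : i ∈ s
  · exact mul_le_mul_of_nonneg_right (hs i h) (by positivity)
  · rw [inner_eq_zero_of_mem_spanEig hA hx h]; simp

lemma le_sEig {r : Fin m} {c : ℝ} {T : Submodule 𝕜 (EuclideanSpace 𝕜 (Fin m))}
    (hT : m - r.val ≤ Module.finrank 𝕜 T)
    (hray : ∀ x ∈ T, c * ‖x‖ ^ 2 ≤ RCLike.re ⟪x, Matrix.toEuclideanLin A x⟫) :
    c ≤ sEig hA r := by
  classical
  set σ := Tuple.sort hA.eigenvalues with hσ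
  set U := spanEig hA ((Finset.Iic r).image σ) with hUdef
  have hcard : ((Finset.Iic r).image σ).card = r.val + 1 := by
    rw [Finset.card_image_of_injective _ σ.injective, Fin.card_Iic]
  have hU : Module.finrank 𝕜 U = r.val + 1 := by rw [hUdef, finrank_spanEig, hcard]
  have hsup := Submodule.finrank_sup_add_finrank_inf_eq T U
  have hle : Module.finrank 𝕜 ↥(T ⊔ U) ≤ m := by
    simpa [finrank_euclideanSpace] using Submodule.finrank_le (T ⊔ U)
  have hrm : r.val < m := r.isLt
  have hTU : 0 < Module.finrank 𝕜 ↥(T ⊓ U) := by omega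
  obtain ⟨⟨x, hxm⟩, hx0⟩ := (Module.finrank_pos_iff_exists_ne_zero (R := 𝕜)).mp hTU
  have hxne : x ≠ 0 := fun h => hx0 (Subtype.ext h)
  have h1 := hray x hxm.1
  have h2 : RCLike.re ⟪x, Matrix.toEuclideanLin A x⟫ ≤ sEig hA r * ‖x‖ ^ 2 := by
    refine ray_le_of_mem hA (fun l hl => ?_) hxm.2
    obtain ⟨u, hu, rfl⟩ := Finset.mem_image.mp hl
    exact Tuple.monotone_sort hA.eigenvalues (Finset.mem_Iic.mp hu)
  have hn : (0:ℝ) < ‖x‖ ^ 2 := by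
    have := norm_pos_iff.mpr hxne
    positivity
  nlinarith [le_trans h1 h2]

noncomputable def topSpan (r : Fin m) : Submodule 𝕜 (EuclideanSpace 𝕜 (Fin m)) :=
  spanEig hA ((Finset.Ici r).image (Tuple.sort hA.eigenvalues))

lemma finrank_topSpan (r : Fin m) : Module.finrank 𝕜 (topSpan hA r) = m - r.val := by
  rw [topSpan, finrank_spanEig,
    Finset.card_image_of_injective _ (Tuple.sort hA.eigenvalues).injective, Fin.card_Ici]

lemma ray_ge_topSpan (r : Fin m) {x} (hx : x ∈ topSpan hA r) :
    sEig hA r * ‖x‖ ^ 2 ≤ RCLike.re ⟪x, Matrix.toEuclideanLin A x⟫ := by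
  refine ray_ge_of_mem hA (fun l hl => ?_) hx
  obtain ⟨u, hu, rfl⟩ := Finset.mem_image.mp hl
  exact Tuple.monotone_sort hA.eigenvalues (Finset.mem_Ici.mp hu)

lemma topSpan_le_range (r : Fin m) (h : 0 < sEig hA r) :
    topSpan hA r ≤ LinearMap.range (Matrix.toEuclideanLin A) := by
  rw [topSpan, spanEig, span_le]
  rintro _ ⟨l, hl, rfl⟩
  obtain ⟨u, hu, rfl⟩ := Finset.mem_image.mp (Finset.mem_coe.mp hl)
  have hpos : 0 < hA.eigenvalues (Tuple.sort hA.eigenvalues u) :=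
    lt_of_lt_of_le h (Tuple.monotone_sort hA.eigenvalues (Finset.mem_Ici.mp hu))
  set l := Tuple.sort hA.eigenvalues u
  refine ⟨((hA.eigenvalues l : 𝕜))⁻¹ • hA.eigenvectorBasis l, ?_⟩
  rw [LinearMap.map_smul, teul_eigen hA l, smul_smul, inv_mul_cancel₀ (by
    simpa using hpos.ne'), one_smul]

end spectral

lemma proj_congr {E : Type*} [NormedAddCommGroup E] [InnerProductSpace 𝕜 E]
    {S T : Submodule 𝕜 E} (h : S = T) [HasOrthogonalProjection S] [HasOrthogonalProjection T]
    (x : E) : ((orthogonalProjection S x : E) = (orthogonalProjection T x : E)) := by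
  subst h
  rfl

lemma inner_orthogonalProjection_left_eq_right {E : Type*} [NormedAddCommGroup E]
    [InnerProductSpace 𝕜 E] (K : Submodule 𝕜 E) [HasOrthogonalProjection K] (u v : E) :
    ⟪(orthogonalProjection K u : E), v⟫ = ⟪u, (orthogonalProjection K v : E)⟫ :=
  Submodule.inner_starProjection_left_eq_right K u v

lemma sub_orthogonalProjection_mem_orthogonal {E : Type*} [NormedAddCommGroup E]
    [InnerProductSpace 𝕜 E] {K : Submodule 𝕜 E} [HasOrthogonalProjection K] (v : E) :
    v - (orthogonalProjection K v : E) ∈ Kᗮ :=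
  Submodule.sub_starProjection_mem_orthogonal v

lemma eq_orthogonalProjection_of_mem_orthogonal {E : Type*} [NormedAddCommGroup E]
    [InnerProductSpace 𝕜 E] {K : Submodule 𝕜 E} [HasOrthogonalProjection K] {u v : E}
    (hv : v ∈ K) (hvo : u - v ∈ Kᗮ) : (orthogonalProjection K u : E) = v :=
  Submodule.eq_starProjection_of_mem_orthogonal hv hvo

lemma teul_mul {a b c : ℕ} (M : Matrix (Fin a) (Fin b) 𝕜) (N : Matrix (Fin b) (Fin c) 𝕜) :
    Matrix.toEuclideanLin (M * N) = (Matrix.toEuclideanLin M).comp (Matrix.toEuclideanLin N) := by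
  rw [Matrix.toEuclideanLin_eq_toLin, Matrix.toLin_mul _ (PiLp.basisFun 2 𝕜 (Fin b)) _]
  rfl

lemma gadj {a b : ℕ} (M : Matrix (Fin a) (Fin b) 𝕜) (x : EuclideanSpace 𝕜 (Fin a))
    (y : EuclideanSpace 𝕜 (Fin b)) :
    ⟪Matrix.toEuclideanLin Mᴴ x, y⟫ = ⟪x, Matrix.toEuclideanLin M y⟫ := by
  rw [Matrix.toEuclideanLin_conjTranspose_eq_adjoint]
  exact LinearMap.adjoint_inner_left _ _ _

lemma gadj' {a b : ℕ} (M : Matrix (Fin a) (Fin b) 𝕜) (x : EuclideanSpace 𝕜 (Fin b))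
    (y : EuclideanSpace 𝕜 (Fin a)) :
    ⟪x, Matrix.toEuclideanLin Mᴴ y⟫ = ⟪Matrix.toEuclideanLin M x, y⟫ := by
  rw [← inner_conj_symm, gadj, inner_conj_symm]

lemma projMat_apply {n : ℕ} (S : Submodule 𝕜 (EuclideanSpace 𝕜 (Fin n)))
    (x : EuclideanSpace 𝕜 (Fin n)) :
    Matrix.toEuclideanLin (projMat S) x = (orthogonalProjection S x : EuclideanSpace 𝕜 (Fin n)) := by
  rw [projMat, LinearEquiv.apply_symm_apply]
  rfl

lemma ray_MtM {a b : ℕ} (M : Matrix (Fin a) (Fin b) 𝕜) (x : EuclideanSpace 𝕜 (Fin b)) :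
    RCLike.re ⟪x, Matrix.toEuclideanLin (Mᴴ * M) x⟫ = ‖Matrix.toEuclideanLin M x‖ ^ 2 := by
  rw [teul_mul, LinearMap.comp_apply, gadj']
  exact inner_self_eq_norm_sq _

lemma arccos_mono {x y : ℝ} (h : x ≤ y) : Real.arccos y ≤ Real.arccos x := by
  unfold Real.arccos
  linarith [Real.monotone_arcsin h]

lemma ray_proj_proj {m : ℕ} (S T : Submodule 𝕜 (EuclideanSpace 𝕜 (Fin m))) (y : EuclideanSpace 𝕜 (Fin m)) :
    RCLike.re ⟪y, Matrix.toEuclideanLin (projMat T * projMat S * projMat T) y⟫ =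
      ‖((orthogonalProjection S ((orthogonalProjection T y : EuclideanSpace 𝕜 (Fin m)))) :
        EuclideanSpace 𝕜 (Fin m))‖ ^ 2 := by
  have h1 : Matrix.toEuclideanLin (projMat T * projMat S * projMat T) y =
      ((orthogonalProjection T ((orthogonalProjection S
        ((orthogonalProjection T y : EuclideanSpace 𝕜 (Fin m)) ) :
          EuclideanSpace 𝕜 (Fin m))) : EuclideanSpace 𝕜 (Fin m))) := by
    rw [teul_mul, teul_mul, LinearMap.comp_apply, LinearMap.comp_apply,
      projMat_apply, projMat_apply, projMat_apply]
  rw [h1, ← inner_orthogonalProjection_left_eq_right]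
  have h3 : (⟪((orthogonalProjection T y : EuclideanSpace 𝕜 (Fin m))),
      ((orthogonalProjection S ((orthogonalProjection T y : EuclideanSpace 𝕜 (Fin m))) :
        EuclideanSpace 𝕜 (Fin m)))⟫) =
      ⟪((orthogonalProjection S ((orthogonalProjection T y : EuclideanSpace 𝕜 (Fin m))) :
        EuclideanSpace 𝕜 (Fin m))),
       ((orthogonalProjection S ((orthogonalProjection T y : EuclideanSpace 𝕜 (Fin m))) :
        EuclideanSpace 𝕜 (Fin m)))⟫ := by
    conv_rhs => rw [inner_orthogonalProjection_left_eq_right (K := S),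
      orthogonalProjection_mem_subspace_eq_self]
  rw [h3]
  exact inner_self_eq_norm_sq _

end MyCF

set_option maxHeartbeats 2000000 in
open MyCF in
theorem stmt4 {n k j : ℕ} (V : Matrix (Fin n) (Fin k) 𝕜) (hV : Vᴴ * V = 1)
    (V' X : Submodule 𝕜 (EuclideanSpace 𝕜 (Fin n)))
    (hdim : Module.finrank 𝕜 V' = j) (hdX : j ≤ Module.finrank 𝕜 X)
    (hVr : V' ≤ LinearMap.range (Matrix.toEuclideanLin V))
    (hang : ∀ i < j, principalAngle X V' i < Real.pi / 2) :
    j ≤ Module.finrank 𝕜 (Submodule.map (Matrix.toEuclideanLin Vᴴ) X) ∧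
      ∀ i < j,
        principalAngle (Submodule.map (Matrix.toEuclideanLin Vᴴ) X)
            (Submodule.map (Matrix.toEuclideanLin Vᴴ) V') i ≤ principalAngle X V' i := by
  classical
  have inst1 : FiniteDimensional 𝕜 (EuclideanSpace 𝕜 (Fin n)) := by infer_instance
  set tV := Matrix.toEuclideanLin V with htV
  set tVh := Matrix.toEuclideanLin Vᴴ with htVh
  have hcomp : ∀ x, tVh (tV x) = x := by
    intro x
    have h : tVh.comp tV = LinearMap.id := by
      rw [htV, htVh, ← MyCF.teul_mul, hV, Matrix.toEuclideanLin_eq_toLin, Matrix.toLin_one]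
    exact congrArg (fun f => f x) h |>.trans rfl
  have hadj1 : ∀ (x : EuclideanSpace 𝕜 (Fin n)) (y : EuclideanSpace 𝕜 (Fin k)),
      inner 𝕜 (tVh x) y = (inner 𝕜 x (tV y) : 𝕜) := MyCF.gadj V
  have hadj2 : ∀ (x : EuclideanSpace 𝕜 (Fin k)) (y : EuclideanSpace 𝕜 (Fin n)),
      inner 𝕜 (tV x) y = (inner 𝕜 x (tVh y) : 𝕜) := fun x y => (MyCF.gadj' V x y).symm
  have hiso : ∀ x y, (inner 𝕜 (tV x) (tV y) : 𝕜) = inner 𝕜 x y := by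
    intro x y
    rw [hadj2, hcomp]
  have hnormV : ∀ x, ‖tV x‖ = ‖x‖ := by
    intro x
    have h1 : ‖tV x‖ ^ 2 = ‖x‖ ^ 2 := by
      rw [← @inner_self_eq_norm_sq 𝕜, ← @inner_self_eq_norm_sq 𝕜, hiso]
    have := congrArg Real.sqrt h1
    rwa [Real.sqrt_sq (norm_nonneg _), Real.sqrt_sq (norm_nonneg _)] at this
  set R := LinearMap.range tV with hR
  have hfix : ∀ x ∈ R, tV (tVh x) = x := by rintro _ ⟨y, rfl⟩; rw [hcomp]
  have hnormVh : ∀ x ∈ R, ‖tVh x‖ = ‖x‖ := by rintro _ ⟨y, rfl⟩; rw [hcomp, hnormV]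
  have hkj : j ≤ k := by
    have h1 : Module.finrank 𝕜 V' ≤ Module.finrank 𝕜 R := Submodule.finrank_mono hVr
    have h2 : Module.finrank 𝕜 R ≤ k := by
      simpa [finrank_euclideanSpace] using LinearMap.finrank_range_le tV
    omega
  set X' := Submodule.map tV (Submodule.map tVh X) with hX'def
  have hX'R : X' ≤ R := by
    rintro _ ⟨y, hy, rfl⟩
    exact ⟨y, rfl⟩
  have hV'R : V' ≤ R := hVr
  -- the key geometric inequality
  have geo : ∀ y ∈ R, ‖(orthogonalProjection X y : EuclideanSpace 𝕜 (Fin n))‖ ≤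
      ‖(orthogonalProjection X' y : EuclideanSpace 𝕜 (Fin n))‖ := by
    intro y hy
    set z := (orthogonalProjection X y : EuclideanSpace 𝕜 (Fin n)) with hz
    by_cases hz0 : z = 0
    · rw [hz0]; simp
    · have hzX : z ∈ X := SetLike.coe_mem _
      set u := tV (tVh z) with hu
      have huX' : u ∈ X' := ⟨tVh z, ⟨z, hzX, rfl⟩, rfl⟩
      have hPadj : ∀ a b, (inner 𝕜 (tV (tVh a)) b : 𝕜) = inner 𝕜 a (tV (tVh b)) := by
        intro a b
        rw [hadj2]
        exact hadj1 a (tVh b)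
      have hinner : (inner 𝕜 u y : 𝕜) = (‖z‖ ^ 2 : ℝ) := by
        have h1 : (inner 𝕜 u y : 𝕜) = inner 𝕜 z y := by
          rw [hu, hPadj, hfix y hy]
        have h2 : (inner 𝕜 z y : 𝕜) = inner 𝕜 z z := by
          have horth := sub_orthogonalProjection_mem_orthogonal (K := X) y
          have h3 : (inner 𝕜 z (y - z) : 𝕜) = 0 :=
            (Submodule.mem_orthogonal X (y - z)).mp horth z hzX
          have := inner_sub_right (𝕜 := 𝕜) z y z
          rw [h3] at this
          linear_combination -this
        rw [h1, h2, @inner_self_eq_norm_sq_to_K 𝕜]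
        norm_num
      have hnu : ‖u‖ ≤ ‖z‖ := by
        by_cases hu0 : u = 0
        · rw [hu0]; simp
        · have h1 : ‖u‖ ^ 2 = RCLike.re (inner 𝕜 u u : 𝕜) := (@inner_self_eq_norm_sq 𝕜 _ _ _ _ u).symm
          have h2 : (inner 𝕜 u u : 𝕜) = inner 𝕜 z u := by
            rw [hu, hPadj, hcomp]
          have h3 : RCLike.re (inner 𝕜 z u : 𝕜) ≤ ‖z‖ * ‖u‖ := by
            calc RCLike.re (inner 𝕜 z u : 𝕜) ≤ ‖(inner 𝕜 z u : 𝕜)‖ := RCLike.re_le_norm _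
            _ ≤ ‖z‖ * ‖u‖ := norm_inner_le_norm _ _
          have h4 : ‖u‖ ^ 2 ≤ ‖z‖ * ‖u‖ := by rw [h1, h2]; exact h3
          have h5 : 0 < ‖u‖ := norm_pos_iff.mpr hu0
          nlinarith
      -- now Cauchy-Schwarz against the projection onto X'
      set w := (orthogonalProjection X' y : EuclideanSpace 𝕜 (Fin n)) with hw
      have h6 : (inner 𝕜 u y : 𝕜) = inner 𝕜 u w := by
        have horth := sub_orthogonalProjection_mem_orthogonal (K := X') y
        have h3 : (inner 𝕜 u (y - w) : 𝕜) = 0 :=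
          (Submodule.mem_orthogonal X' (y - w)).mp horth u huX'
        have := inner_sub_right (𝕜 := 𝕜) u y w
        rw [h3] at this
        linear_combination -this
      have h7 : ‖z‖ ^ 2 ≤ ‖u‖ * ‖w‖ := by
        calc (‖z‖ ^ 2 : ℝ) = ‖(inner 𝕜 u y : 𝕜)‖ := by rw [hinner, RCLike.norm_ofReal, abs_of_nonneg (sq_nonneg _)]
        _ = ‖(inner 𝕜 u w : 𝕜)‖ := by rw [h6]
        _ ≤ ‖u‖ * ‖w‖ := norm_inner_le_norm _ _
      have hz1 : 0 < ‖z‖ := norm_pos_iff.mpr hz0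
      have h8 : ‖u‖ * ‖w‖ ≤ ‖z‖ * ‖w‖ := mul_le_mul_of_nonneg_right hnu (norm_nonneg w)
      nlinarith
  -- projections of mapped submodules
  have hproj : ∀ (S : Submodule 𝕜 (EuclideanSpace 𝕜 (Fin n))), S ≤ R →
      ∀ x : EuclideanSpace 𝕜 (Fin k),
      (orthogonalProjection (Submodule.map tVh S) x : EuclideanSpace 𝕜 (Fin k)) =
        tVh (orthogonalProjection S (tV x) : EuclideanSpace 𝕜 (Fin n)) := by
    intro S hS x
    refine eq_orthogonalProjection_of_mem_orthogonal ?_ ?_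
    · exact ⟨_, SetLike.coe_mem _, rfl⟩
    · rw [Submodule.mem_orthogonal]
      rintro _ ⟨s, hs, rfl⟩
      set t := (orthogonalProjection S (tV x) : EuclideanSpace 𝕜 (Fin n)) with ht
      have h1 : (inner 𝕜 (tVh s) (x - tVh t) : 𝕜) = inner 𝕜 s (tV x - t) := by
        rw [inner_sub_right, inner_sub_right, hadj1, hadj1, hfix t (hS (SetLike.coe_mem _))]
      rw [h1]
      exact (Submodule.mem_orthogonal S _).mp
        (sub_orthogonalProjection_mem_orthogonal (K := S) (tV x)) s hs
  set W' := Submodule.map tVh X with hW'def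
  set H' := Submodule.map tVh V' with hH'def
  have hWX' : Submodule.map tVh X' = W' := by
    ext zz
    constructor
    · rintro ⟨a, haX', rfl⟩
      obtain ⟨bb, hbb, rfl⟩ := haX'
      obtain ⟨xx, hxx, rfl⟩ := hbb
      exact ⟨xx, hxx, by rw [hcomp]⟩
    · rintro ⟨xx, hxx, rfl⟩
      refine ⟨tV (tVh xx), ⟨tVh xx, ⟨xx, hxx, rfl⟩, rfl⟩, ?_⟩
      rw [hcomp]
  -- matrices
  set M := projMat X * projMat V' with hMdef
  set Mw := projMat W' * projMat H' with hMwdef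
  set B := Mᴴ * M with hBdef
  set C := Mwᴴ * Mw with hCdef
  set A := projMat V' * projMat X' * projMat V' with hAdef
  have hB : B.IsHermitian := Matrix.isHermitian_conjTranspose_mul_self M
  have hC : C.IsHermitian := Matrix.isHermitian_conjTranspose_mul_self Mw
  have hprojherm : ∀ (S : Submodule 𝕜 (EuclideanSpace 𝕜 (Fin n))), (projMat S)ᴴ = projMat S := by
    intro S
    apply Matrix.toEuclideanLin.injective
    apply LinearMap.ext
    intro x
    apply ext_inner_right 𝕜
    intro yy
    rw [MyCF.gadj, MyCF.projMat_apply, MyCF.projMat_apply,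
      inner_orthogonalProjection_left_eq_right]
  have hA : A.IsHermitian := by
    have h2 := hprojherm X'
    have h1 := hprojherm V'
    show Aᴴ = A
    rw [hAdef, Matrix.conjTranspose_mul, Matrix.conjTranspose_mul, h1, h2, Matrix.mul_assoc]
  -- Rayleigh identities
  have htM : ∀ y, Matrix.toEuclideanLin M y =
      (orthogonalProjection X ((orthogonalProjection V' y : EuclideanSpace 𝕜 (Fin n))) :
        EuclideanSpace 𝕜 (Fin n)) := by
    intro y
    rw [hMdef, MyCF.teul_mul, LinearMap.comp_apply, MyCF.projMat_apply, MyCF.projMat_apply]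
  have htMw : ∀ x, Matrix.toEuclideanLin Mw x =
      (orthogonalProjection W' ((orthogonalProjection H' x : EuclideanSpace 𝕜 (Fin k))) :
        EuclideanSpace 𝕜 (Fin k)) := by
    intro x
    rw [hMwdef, MyCF.teul_mul, LinearMap.comp_apply, MyCF.projMat_apply, MyCF.projMat_apply]
  have rayB : ∀ y, RCLike.re (inner 𝕜 y (Matrix.toEuclideanLin B y) : 𝕜) =
      ‖(orthogonalProjection X ((orthogonalProjection V' y : EuclideanSpace 𝕜 (Fin n))) :
        EuclideanSpace 𝕜 (Fin n))‖ ^ 2 := by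
    intro y
    rw [hBdef, MyCF.ray_MtM, htM]
  have rayC : ∀ x, RCLike.re (inner 𝕜 x (Matrix.toEuclideanLin C x) : 𝕜) =
      ‖(orthogonalProjection W' ((orthogonalProjection H' x : EuclideanSpace 𝕜 (Fin k))) :
        EuclideanSpace 𝕜 (Fin k))‖ ^ 2 := by
    intro x
    rw [hCdef, MyCF.ray_MtM, htMw]
  have rayA : ∀ y, RCLike.re (inner 𝕜 y (Matrix.toEuclideanLin A y) : 𝕜) =
      ‖(orthogonalProjection X' ((orthogonalProjection V' y : EuclideanSpace 𝕜 (Fin n))) :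
        EuclideanSpace 𝕜 (Fin n))‖ ^ 2 := by
    intro y
    rw [hAdef]
    exact MyCF.ray_proj_proj X' V' y
  have rayBA : ∀ y, RCLike.re (inner 𝕜 y (Matrix.toEuclideanLin B y) : 𝕜) ≤
      RCLike.re (inner 𝕜 y (Matrix.toEuclideanLin A y) : 𝕜) := by
    intro y
    rw [rayB, rayA]
    have hg := geo (orthogonalProjection V' y : EuclideanSpace 𝕜 (Fin n))
      (hV'R (SetLike.coe_mem _))
    exact pow_le_pow_left₀ (norm_nonneg _) hg 2
  have rangeA : LinearMap.range (Matrix.toEuclideanLin A) ≤ R := by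
    rintro _ ⟨y, rfl⟩
    have h1 : Matrix.toEuclideanLin A y =
        ((orthogonalProjection V' ((orthogonalProjection X'
          ((orthogonalProjection V' y : EuclideanSpace 𝕜 (Fin n))) :
            EuclideanSpace 𝕜 (Fin n))) : EuclideanSpace 𝕜 (Fin n))) := by
      rw [hAdef, MyCF.teul_mul, MyCF.teul_mul, LinearMap.comp_apply, LinearMap.comp_apply,
        MyCF.projMat_apply, MyCF.projMat_apply, MyCF.projMat_apply]
    rw [h1]
    exact hV'R (SetLike.coe_mem _)
  have rayCA : ∀ x : EuclideanSpace 𝕜 (Fin k),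
      RCLike.re (inner 𝕜 x (Matrix.toEuclideanLin C x) : 𝕜) =
      RCLike.re (inner 𝕜 (tV x) (Matrix.toEuclideanLin A (tV x)) : 𝕜) := by
    intro x
    rw [rayC, rayA]
    have h1 : (orthogonalProjection H' x : EuclideanSpace 𝕜 (Fin k)) =
        tVh (orthogonalProjection V' (tV x) : EuclideanSpace 𝕜 (Fin n)) := by
      exact hproj V' hV'R x
    have h2 : (orthogonalProjection W'
          ((orthogonalProjection H' x : EuclideanSpace 𝕜 (Fin k))) : EuclideanSpace 𝕜 (Fin k)) =
        tVh ((orthogonalProjection X'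
          ((orthogonalProjection V' (tV x) : EuclideanSpace 𝕜 (Fin n))) :
            EuclideanSpace 𝕜 (Fin n))) := by
      rw [h1]
      calc ((orthogonalProjection W' (tVh ((orthogonalProjection V' (tV x) :
              EuclideanSpace 𝕜 (Fin n)))) : EuclideanSpace 𝕜 (Fin k)))
          = ((orthogonalProjection (Submodule.map tVh X') (tVh ((orthogonalProjection V' (tV x) :
              EuclideanSpace 𝕜 (Fin n)))) : EuclideanSpace 𝕜 (Fin k))) :=
            MyCF.proj_congr hWX'.symm _
        _ = tVh ((orthogonalProjection X' (tV (tVh ((orthogonalProjection V' (tV x) :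
              EuclideanSpace 𝕜 (Fin n))))) : EuclideanSpace 𝕜 (Fin n))) := hproj X' hX'R _
        _ = tVh ((orthogonalProjection X' ((orthogonalProjection V' (tV x) :
              EuclideanSpace 𝕜 (Fin n))) : EuclideanSpace 𝕜 (Fin n))) := by
            rw [hfix _ (hV'R (SetLike.coe_mem _))]
    rw [h2, hnormVh _ (hX'R (SetLike.coe_mem _))]
  have hin_of : ∀ i, i < j → i < n := by
    intro i hij
    by_contra hni
    have h := hang i hij
    unfold principalAngle singValN at h
    rw [dif_neg hni, Real.arccos_zero] at h
    exact lt_irrefl _ h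
  have cpos : ∀ i (hij : i < j), 0 < MyCF.sEig hB (Fin.rev ⟨i, hin_of i hij⟩) := by
    intro i hij
    have h := hang i hij
    unfold principalAngle singValN at h
    rw [dif_pos (hin_of i hij)] at h
    rw [← hMdef] at h
    have h2 : 0 < singVal M ⟨i, hin_of i hij⟩ := Real.arccos_lt_pi_div_two.mp h
    have h3 : singVal M ⟨i, hin_of i hij⟩ =
        Real.sqrt (MyCF.sEig hB (Fin.rev ⟨i, hin_of i hij⟩)) := rfl
    rw [h3] at h2
    exact Real.sqrt_pos.mp h2
  have chain : ∀ i (hij : i < j),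
      MyCF.sEig hB (Fin.rev ⟨i, hin_of i hij⟩) ≤
        MyCF.sEig hC (Fin.rev ⟨i, lt_of_lt_of_le hij hkj⟩) ∧
      ∃ T' : Submodule 𝕜 (EuclideanSpace 𝕜 (Fin k)), Module.finrank 𝕜 T' = i + 1 ∧
        ∀ x ∈ T', MyCF.sEig hB (Fin.rev ⟨i, hin_of i hij⟩) * ‖x‖ ^ 2 ≤
          RCLike.re (inner 𝕜 x (Matrix.toEuclideanLin C x) : 𝕜) := by
    intro i hij
    have hin := hin_of i hij
    have hik : i < k := lt_of_lt_of_le hij hkj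
    have hrBval : n - (Fin.rev (⟨i, hin⟩ : Fin n)).val = i + 1 := by
      have hfv := Fin.val_rev (⟨i, hin⟩ : Fin n)
      have hv : ((⟨i, hin⟩ : Fin n) : ℕ) = i := rfl
      rw [hv] at hfv
      omega
    have hrCval : k - (Fin.rev (⟨i, hik⟩ : Fin k)).val = i + 1 := by
      have hfv := Fin.val_rev (⟨i, hik⟩ : Fin k)
      have hv : ((⟨i, hik⟩ : Fin k) : ℕ) = i := rfl
      rw [hv] at hfv
      omega
    have hc : 0 < MyCF.sEig hB (Fin.rev ⟨i, hin⟩) := cpos i hij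
    have step1 : MyCF.sEig hB (Fin.rev ⟨i, hin⟩) ≤ MyCF.sEig hA (Fin.rev ⟨i, hin⟩) := by
      refine MyCF.le_sEig hA (T := MyCF.topSpan hB (Fin.rev ⟨i, hin⟩)) ?_ ?_
      · rw [MyCF.finrank_topSpan]
      · intro x hx
        exact le_trans (MyCF.ray_ge_topSpan hB (Fin.rev ⟨i, hin⟩) hx) (rayBA x)
    have hApos : 0 < MyCF.sEig hA (Fin.rev ⟨i, hin⟩) := lt_of_lt_of_le hc step1
    have hTR : MyCF.topSpan hA (Fin.rev ⟨i, hin⟩) ≤ R :=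
      le_trans (MyCF.topSpan_le_range hA (Fin.rev ⟨i, hin⟩) hApos) rangeA
    have hfr : Module.finrank 𝕜 (Submodule.map tVh (MyCF.topSpan hA (Fin.rev ⟨i, hin⟩))) = i + 1 := by
      have h1 : Submodule.map tV (Submodule.map tVh (MyCF.topSpan hA (Fin.rev ⟨i, hin⟩))) =
          MyCF.topSpan hA (Fin.rev ⟨i, hin⟩) := by
        ext zz
        constructor
        · rintro ⟨a, ⟨t, ht, rfl⟩, rfl⟩
          rw [hfix t (hTR ht)]
          exact ht
        · intro hzz
          exact ⟨tVh zz, ⟨zz, hzz, rfl⟩, hfix zz (hTR hzz)⟩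
      have h2 : Module.finrank 𝕜 (MyCF.topSpan hA (Fin.rev ⟨i, hin⟩)) = i + 1 := by
        rw [MyCF.finrank_topSpan]
        exact hrBval
      have h3 := Submodule.finrank_map_le tVh (MyCF.topSpan hA (Fin.rev ⟨i, hin⟩))
      have h4 := Submodule.finrank_map_le tV
        (Submodule.map tVh (MyCF.topSpan hA (Fin.rev ⟨i, hin⟩)))
      rw [h1, h2] at h4
      rw [h2] at h3
      omega
    have hrayT' : ∀ x ∈ Submodule.map tVh (MyCF.topSpan hA (Fin.rev ⟨i, hin⟩)),
        MyCF.sEig hA (Fin.rev ⟨i, hin⟩) * ‖x‖ ^ 2 ≤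
        RCLike.re (inner 𝕜 x (Matrix.toEuclideanLin C x) : 𝕜) := by
      rintro _ ⟨t, ht, rfl⟩
      rw [rayCA (tVh t), hfix t (hTR ht), hnormVh t (hTR ht)]
      exact MyCF.ray_ge_topSpan hA (Fin.rev ⟨i, hin⟩) ht
    have step2 : MyCF.sEig hA (Fin.rev ⟨i, hin⟩) ≤ MyCF.sEig hC (Fin.rev ⟨i, hik⟩) := by
      refine MyCF.le_sEig hC
        (T := Submodule.map tVh (MyCF.topSpan hA (Fin.rev ⟨i, hin⟩))) ?_ hrayT'
      rw [hfr]
      exact le_of_eq hrCval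
    refine ⟨le_trans step1 step2, Submodule.map tVh (MyCF.topSpan hA (Fin.rev ⟨i, hin⟩)),
      hfr, fun x hx => ?_⟩
    refine le_trans ?_ (hrayT' x hx)
    exact mul_le_mul_of_nonneg_right step1 (sq_nonneg _)
  constructor
  · rcases Nat.eq_zero_or_pos j with hj0 | hjpos
    · omega
    · have hij : j - 1 < j := by omega
      obtain ⟨hch, T', hfr, hray⟩ := chain (j-1) hij
      have hc := cpos (j-1) hij
      set f := (Matrix.toEuclideanLin Mw).comp (Submodule.subtype T') with hfdef
      have hkerf : LinearMap.ker f = ⊥ := by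
        refine LinearMap.ker_eq_bot'.mpr ?_
        intro x hx0
        have h1 : RCLike.re (inner 𝕜 (x : EuclideanSpace 𝕜 (Fin k))
            (Matrix.toEuclideanLin C (x : EuclideanSpace 𝕜 (Fin k))) : 𝕜) =
            ‖Matrix.toEuclideanLin Mw (x : EuclideanSpace 𝕜 (Fin k))‖ ^ 2 := by
          rw [hCdef]
          exact MyCF.ray_MtM Mw _
        have h2 := hray (x : EuclideanSpace 𝕜 (Fin k)) x.2
        have h3 : Matrix.toEuclideanLin Mw (x : EuclideanSpace 𝕜 (Fin k)) = 0 := hx0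
        rw [h3] at h1
        simp only [norm_zero] at h1
        rw [h1] at h2
        have h4 : ‖(x : EuclideanSpace 𝕜 (Fin k))‖ ^ 2 ≤ 0 := by nlinarith
        have h5 : (x : EuclideanSpace 𝕜 (Fin k)) = 0 := by
          have := sq_nonneg ‖(x : EuclideanSpace 𝕜 (Fin k))‖
          have h6 : ‖(x : EuclideanSpace 𝕜 (Fin k))‖ = 0 := by nlinarith
          exact norm_eq_zero.mp h6
        exact Subtype.ext h5
      have hrange : LinearMap.range f ≤ W' := by
        rintro _ ⟨x, rfl⟩
        show Matrix.toEuclideanLin Mw (x : EuclideanSpace 𝕜 (Fin k)) ∈ W'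
        rw [htMw]
        exact SetLike.coe_mem _
      have hrn := LinearMap.finrank_range_add_finrank_ker f
      rw [hkerf, finrank_bot, add_zero] at hrn
      have h5 : Module.finrank 𝕜 (LinearMap.range f) ≤ Module.finrank 𝕜 W' :=
        Submodule.finrank_mono hrange
      omega
  · intro i hij
    obtain ⟨hch, -⟩ := chain i hij
    have hin := hin_of i hij
    have hik : i < k := lt_of_lt_of_le hij hkj
    unfold principalAngle
    rw [← hMwdef, ← hMdef]
    apply MyCF.arccos_mono
    unfold singValN
    rw [dif_pos hik, dif_pos hin]
    show Real.sqrt (MyCF.sEig hB (Fin.rev ⟨i, hin⟩)) ≤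
      Real.sqrt (MyCF.sEig hC (Fin.rev ⟨i, hik⟩))
    exact Real.sqrt_le_sqrt hch
end

section
/- Let T', T'' ⊆ K^k be mutually orthogonal subspaces and H', H'' ⊆ K^k be mutually orthogonal subspaces with dim H' ≤ dim T' and dim H'' ≤ dim T''. Let T = T' ⊕ T'' and H = H' ⊕ H''. Then ‖(I − P_T) P_H‖ ≤ 2 (‖(I − P_{T'}) P_{H'}‖ + ‖(I − P_{T''}) P_{H''}‖), where ‖·‖ is the spectral norm; the same inequality holds for the Frobenius norm. -/
open Matrix Submodule

variable {𝕜 : Type*} [RCLike 𝕜]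

section Aux
variable {k : ℕ}
lemma projMat_apply (S : Submodule 𝕜 (EuclideanSpace 𝕜 (Fin k))) (x : EuclideanSpace 𝕜 (Fin k)) :
    Matrix.toEuclideanLin (projMat S) x = (orthogonalProjection S x : EuclideanSpace 𝕜 (Fin k)) := by
  simp [projMat]

lemma projMat_sup {H' H'' : Submodule 𝕜 (EuclideanSpace 𝕜 (Fin k))} (h : H' ≤ H''ᗮ) :
    projMat (H' ⊔ H'') = projMat H' + projMat H'' := by
  have h2 : H'' ≤ H'ᗮ := fun y hy => (Submodule.mem_orthogonal' H' y).2
    (fun u hu => by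
      have := (Submodule.mem_orthogonal H'' u).1 (h hu) y hy
      simpa [inner_eq_zero_symm] using this)
  apply Matrix.toEuclideanLin.injective
  rw [map_add]
  apply LinearMap.ext; intro x
  simp only [LinearMap.add_apply, projMat_apply]
  refine eq_starProjection_of_mem_of_inner_eq_zero
    (Submodule.add_mem _ (Submodule.mem_sup_left (coe_mem _)) (Submodule.mem_sup_right (coe_mem _)))
    (fun w hw => ?_)
  rcases Submodule.mem_sup.1 hw with ⟨y, hy, z, hz, rfl⟩
  have k1 : x - (orthogonalProjection H' x : _) ∈ H'ᗮ := sub_starProjection_mem_orthogonal x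
  have k2 : x - (orthogonalProjection H'' x : _) ∈ H''ᗮ := sub_starProjection_mem_orthogonal x
  have cy : (inner 𝕜 (x - ((orthogonalProjection H' x : EuclideanSpace 𝕜 (Fin k))
      + orthogonalProjection H'' x)) y : 𝕜) = 0 := by
    have e : x - ((orthogonalProjection H' x : EuclideanSpace 𝕜 (Fin k)) + orthogonalProjection H'' x)
        = (x - orthogonalProjection H' x) - (orthogonalProjection H'' x : EuclideanSpace 𝕜 (Fin k)) := by
      abel
    rw [e, inner_sub_left, (Submodule.mem_orthogonal' H' _).1 k1 y hy,
      (Submodule.mem_orthogonal H'' y).1 (h hy) _ (coe_mem _), sub_zero]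
  have cz : (inner 𝕜 (x - ((orthogonalProjection H' x : EuclideanSpace 𝕜 (Fin k))
      + orthogonalProjection H'' x)) z : 𝕜) = 0 := by
    have e : x - ((orthogonalProjection H' x : EuclideanSpace 𝕜 (Fin k)) + orthogonalProjection H'' x)
        = (x - orthogonalProjection H'' x) - (orthogonalProjection H' x : EuclideanSpace 𝕜 (Fin k)) := by
      abel
    rw [e, inner_sub_left, (Submodule.mem_orthogonal' H'' _).1 k2 z hz,
      (Submodule.mem_orthogonal H' z).1 (h2 hz) _ (coe_mem _), sub_zero]
  rw [inner_add_right, cy, cz, add_zero]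
lemma toEuclideanLin_mul (A B : Matrix (Fin k) (Fin k) 𝕜) :
    Matrix.toEuclideanLin (A * B) = (Matrix.toEuclideanLin A).comp (Matrix.toEuclideanLin B) := by
  apply LinearMap.ext; intro x
  simp [Matrix.toEuclideanLin_apply, Matrix.mulVec_mulVec]

lemma toEuclideanLin_one : (Matrix.toEuclideanLin (1 : Matrix (Fin k) (Fin k) 𝕜)) = LinearMap.id := by
  apply LinearMap.ext; intro x
  simp [Matrix.toEuclideanLin_apply, Matrix.one_mulVec]

lemma projMat_mul_of_le {S T : Submodule 𝕜 (EuclideanSpace 𝕜 (Fin k))} (h : S ≤ T) :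
    projMat T * projMat S = projMat S := by
  apply Matrix.toEuclideanLin.injective
  rw [toEuclideanLin_mul]
  apply LinearMap.ext; intro x
  simp only [LinearMap.comp_apply, projMat_apply]
  exact starProjection_eq_self_iff.2 (h (coe_mem _))

lemma specNorm_apply_le (A : Matrix (Fin k) (Fin k) 𝕜) (x : EuclideanSpace 𝕜 (Fin k)) :
    ‖Matrix.toEuclideanLin A x‖ ≤ specNorm A * ‖x‖ :=
  (LinearMap.toContinuousLinearMap (Matrix.toEuclideanLin A)).le_opNorm x

lemma specNorm_le_of_bound (A : Matrix (Fin k) (Fin k) 𝕜) {c : ℝ} (hc : 0 ≤ c)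
    (h : ∀ x, ‖Matrix.toEuclideanLin A x‖ ≤ c * ‖x‖) : specNorm A ≤ c :=
  ContinuousLinearMap.opNorm_le_bound _ hc (fun x => h x)

lemma specNorm_nonneg (A : Matrix (Fin k) (Fin k) 𝕜) : 0 ≤ specNorm A := norm_nonneg _

lemma specNorm_one_sub_projMat (S : Submodule 𝕜 (EuclideanSpace 𝕜 (Fin k))) :
    specNorm (1 - projMat S) ≤ 1 := by
  apply specNorm_le_of_bound _ zero_le_one
  intro x
  rw [map_sub, toEuclideanLin_one]
  simp only [LinearMap.sub_apply, LinearMap.id_apply, projMat_apply, one_mul]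
  rw [← starProjection_apply, ← starProjection_orthogonal_val, starProjection_apply]
  calc ‖((orthogonalProjection Sᗮ) x : EuclideanSpace 𝕜 (Fin k))‖
      = ‖(orthogonalProjection Sᗮ) x‖ := rfl
    _ ≤ ‖(orthogonalProjection Sᗮ)‖ * ‖x‖ := ContinuousLinearMap.le_opNorm _ x
    _ ≤ 1 * ‖x‖ := by
        exact mul_le_mul_of_nonneg_right (orthogonalProjection_norm_le _) (norm_nonneg x)
    _ = ‖x‖ := one_mul _

lemma specNorm_add_le (A B : Matrix (Fin k) (Fin k) 𝕜) :
    specNorm (A + B) ≤ specNorm A + specNorm B := by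
  apply specNorm_le_of_bound _ (add_nonneg (specNorm_nonneg _) (specNorm_nonneg _))
  intro x
  rw [map_add]
  simp only [LinearMap.add_apply]
  calc ‖Matrix.toEuclideanLin A x + Matrix.toEuclideanLin B x‖
      ≤ ‖Matrix.toEuclideanLin A x‖ + ‖Matrix.toEuclideanLin B x‖ := norm_add_le _ _
    _ ≤ specNorm A * ‖x‖ + specNorm B * ‖x‖ := add_le_add (specNorm_apply_le _ _) (specNorm_apply_le _ _)
    _ = (specNorm A + specNorm B) * ‖x‖ := by ring

lemma specNorm_mul_le (A B : Matrix (Fin k) (Fin k) 𝕜) :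
    specNorm (A * B) ≤ specNorm A * specNorm B := by
  apply specNorm_le_of_bound _ (mul_nonneg (specNorm_nonneg _) (specNorm_nonneg _))
  intro x
  rw [toEuclideanLin_mul]
  calc ‖Matrix.toEuclideanLin A (Matrix.toEuclideanLin B x)‖
      ≤ specNorm A * ‖Matrix.toEuclideanLin B x‖ := specNorm_apply_le _ _
    _ ≤ specNorm A * (specNorm B * ‖x‖) :=
        mul_le_mul_of_nonneg_left (specNorm_apply_le _ _) (specNorm_nonneg _)
    _ = specNorm A * specNorm B * ‖x‖ := by ring
section Frob
attribute [local instance] Matrix.frobeniusSeminormedAddCommGroup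

lemma frobNorm_eq_norm {m n : ℕ} (A : Matrix (Fin m) (Fin n) 𝕜) : frobNorm A = ‖A‖ := by
  rw [Matrix.frobenius_norm_def, frobNorm, Real.sqrt_eq_rpow]
  simp_rw [Real.rpow_two]

lemma frobNorm_add_le {m n : ℕ} (A B : Matrix (Fin m) (Fin n) 𝕜) :
    frobNorm (A + B) ≤ frobNorm A + frobNorm B := by
  simp_rw [frobNorm_eq_norm]; exact norm_add_le A B

end Frob

lemma frobNorm_nonneg {m n : ℕ} (A : Matrix (Fin m) (Fin n) 𝕜) : 0 ≤ frobNorm A :=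
  Real.sqrt_nonneg _

lemma frobNorm_mul_le_spec (A B : Matrix (Fin k) (Fin k) 𝕜) :
    frobNorm (A * B) ≤ specNorm A * frobNorm B := by
  have key : ∀ j : Fin k, ∑ i, ‖(A * B) i j‖ ^ 2 ≤ specNorm A ^ 2 * ∑ i, ‖B i j‖ ^ 2 := by
    intro j
    set c : EuclideanSpace 𝕜 (Fin k) := (WithLp.equiv 2 _).symm (fun i => B i j) with hc
    have h1 : ∑ i, ‖(A * B) i j‖ ^ 2 = ‖Matrix.toEuclideanLin A c‖ ^ 2 := by
      rw [EuclideanSpace.norm_eq, Real.sq_sqrt (by positivity)]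
      refine Finset.sum_congr rfl (fun i _ => ?_)
      have he : (Matrix.toEuclideanLin A c) i = (A * B) i j := by
        rw [Matrix.toEuclideanLin_apply]
        show (A *ᵥ (WithLp.equiv 2 _) c) i = _
        simp [Matrix.mul_apply, Matrix.mulVec, dotProduct, hc]
      rw [he]
    have h2 : ‖c‖ ^ 2 = ∑ i, ‖B i j‖ ^ 2 := by
      rw [EuclideanSpace.norm_eq, Real.sq_sqrt (by positivity)]
      rfl
    rw [h1, ← h2]
    calc ‖Matrix.toEuclideanLin A c‖ ^ 2 ≤ (specNorm A * ‖c‖) ^ 2 := by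
          apply pow_le_pow_left₀ (norm_nonneg _) (specNorm_apply_le _ _)
      _ = specNorm A ^ 2 * ‖c‖ ^ 2 := by ring
  calc frobNorm (A * B) = Real.sqrt (∑ j, ∑ i, ‖(A * B) i j‖ ^ 2) := by
        rw [frobNorm, Finset.sum_comm]
    _ ≤ Real.sqrt (∑ j, specNorm A ^ 2 * ∑ i, ‖B i j‖ ^ 2) :=
        Real.sqrt_le_sqrt (Finset.sum_le_sum (fun j _ => key j))
    _ = Real.sqrt (specNorm A ^ 2 * ∑ j, ∑ i, ‖B i j‖ ^ 2) := by rw [← Finset.mul_sum]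
    _ = specNorm A * Real.sqrt (∑ j, ∑ i, ‖B i j‖ ^ 2) := by
        rw [Real.sqrt_mul (sq_nonneg _), Real.sqrt_sq (specNorm_nonneg _)]
    _ = specNorm A * frobNorm B := by rw [frobNorm, Finset.sum_comm]
end Aux

theorem stmt6 {k : ℕ} (T' T'' H' H'' : Submodule 𝕜 (EuclideanSpace 𝕜 (Fin k)))
    (hTperp : T' ≤ T''ᗮ) (hHperp : H' ≤ H''ᗮ)
    (h1 : Module.finrank 𝕜 H' ≤ Module.finrank 𝕜 T')
    (h2 : Module.finrank 𝕜 H'' ≤ Module.finrank 𝕜 T'') :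
    specNorm ((1 - projMat (T' ⊔ T'')) * projMat (H' ⊔ H'')) ≤
      2 * (specNorm ((1 - projMat T') * projMat H') +
        specNorm ((1 - projMat T'') * projMat H'')) ∧
    frobNorm ((1 - projMat (T' ⊔ T'')) * projMat (H' ⊔ H'')) ≤
      2 * (frobNorm ((1 - projMat T') * projMat H') +
        frobNorm ((1 - projMat T'') * projMat H'')) := by
  have hP1 : projMat (T' ⊔ T'') * projMat T' = projMat T' := projMat_mul_of_le le_sup_left
  have hP2 : projMat (T' ⊔ T'') * projMat T'' = projMat T'' := projMat_mul_of_le le_sup_right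
  have hQ : projMat (H' ⊔ H'') = projMat H' + projMat H'' := projMat_sup hHperp
  have e0 : ∀ (P1 : Matrix (Fin k) (Fin k) 𝕜),
      projMat (T' ⊔ T'') * P1 = P1 →
      (1 - projMat (T' ⊔ T'')) * (1 - P1) = 1 - projMat (T' ⊔ T'') := by
    intro P1 hP
    rw [mul_sub, mul_one, sub_mul, one_mul, hP]
    abel
  have esplit : (1 - projMat (T' ⊔ T'')) * projMat (H' ⊔ H'')
      = (1 - projMat (T' ⊔ T'')) * ((1 - projMat T') * projMat H')
        + (1 - projMat (T' ⊔ T'')) * ((1 - projMat T'') * projMat H'') := by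
    rw [← mul_assoc, ← mul_assoc, e0 _ hP1, e0 _ hP2, ← mul_add, ← hQ]
  have hPle : specNorm (1 - projMat (T' ⊔ T'')) ≤ 1 := specNorm_one_sub_projMat _
  constructor
  · rw [esplit]
    have c1 : specNorm ((1 - projMat (T' ⊔ T'')) * ((1 - projMat T') * projMat H'))
        ≤ specNorm ((1 - projMat T') * projMat H') := by
      refine (specNorm_mul_le _ _).trans ?_
      calc specNorm (1 - projMat (T' ⊔ T'')) * specNorm ((1 - projMat T') * projMat H')
          ≤ 1 * specNorm ((1 - projMat T') * projMat H') :=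
            mul_le_mul_of_nonneg_right hPle (specNorm_nonneg _)
        _ = _ := one_mul _
    have c2 : specNorm ((1 - projMat (T' ⊔ T'')) * ((1 - projMat T'') * projMat H''))
        ≤ specNorm ((1 - projMat T'') * projMat H'') := by
      refine (specNorm_mul_le _ _).trans ?_
      calc specNorm (1 - projMat (T' ⊔ T'')) * specNorm ((1 - projMat T'') * projMat H'')
          ≤ 1 * specNorm ((1 - projMat T'') * projMat H'') :=
            mul_le_mul_of_nonneg_right hPle (specNorm_nonneg _)
        _ = _ := one_mul _
    have := specNorm_add_le ((1 - projMat (T' ⊔ T'')) * ((1 - projMat T') * projMat H'))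
      ((1 - projMat (T' ⊔ T'')) * ((1 - projMat T'') * projMat H''))
    have n1 := specNorm_nonneg ((1 - projMat T') * projMat H')
    have n2 := specNorm_nonneg ((1 - projMat T'') * projMat H'')
    linarith
  · rw [esplit]
    have c1 : frobNorm ((1 - projMat (T' ⊔ T'')) * ((1 - projMat T') * projMat H'))
        ≤ frobNorm ((1 - projMat T') * projMat H') := by
      refine (frobNorm_mul_le_spec _ _).trans ?_
      calc specNorm (1 - projMat (T' ⊔ T'')) * frobNorm ((1 - projMat T') * projMat H')
          ≤ 1 * frobNorm ((1 - projMat T') * projMat H') :=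
            mul_le_mul_of_nonneg_right hPle (frobNorm_nonneg _)
        _ = _ := one_mul _
    have c2 : frobNorm ((1 - projMat (T' ⊔ T'')) * ((1 - projMat T'') * projMat H''))
        ≤ frobNorm ((1 - projMat T'') * projMat H'') := by
      refine (frobNorm_mul_le_spec _ _).trans ?_
      calc specNorm (1 - projMat (T' ⊔ T'')) * frobNorm ((1 - projMat T'') * projMat H'')
          ≤ 1 * frobNorm ((1 - projMat T'') * projMat H'') :=
            mul_le_mul_of_nonneg_right hPle (frobNorm_nonneg _)
        _ = _ := one_mul _
    have := frobNorm_add_le ((1 - projMat (T' ⊔ T'')) * ((1 - projMat T') * projMat H'))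
      ((1 - projMat (T' ⊔ T'')) * ((1 - projMat T'') * projMat H''))
    have n1 := frobNorm_nonneg ((1 - projMat T') * projMat H')
    have n2 := frobNorm_nonneg ((1 - projMat T'') * projMat H'')
    linarith
end

section
/- Let B ∈ K^{p×q} and C ∈ K^{q×r} with V = range(C), and suppose V ⊆ (ker B)^⊥. Then (BC)† = C† (B P_V)†, where † denotes the Moore–Penrose pseudoinverse and P_V is the orthogonal projection onto V. -/
open Matrix Submodule

variable {𝕜 : Type*} [RCLike 𝕜]

/- Auxiliary lemmas -/

lemma teLin_mul {a b c : ℕ} (A : Matrix (Fin a) (Fin b) 𝕜) (B : Matrix (Fin b) (Fin c) 𝕜)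
    (v : EuclideanSpace 𝕜 (Fin c)) :
    Matrix.toEuclideanLin (A * B) v
      = Matrix.toEuclideanLin A (Matrix.toEuclideanLin B v) := by
  simp [Matrix.toEuclideanLin_apply, Matrix.mulVec_mulVec]

lemma mp_unique {m n : ℕ} {A : Matrix (Fin m) (Fin n) 𝕜} {X Y : Matrix (Fin n) (Fin m) 𝕜}
    (hX : IsMoorePenrose A X) (hY : IsMoorePenrose A Y) : X = Y := by
  obtain ⟨hX1, hX2, hX3, hX4⟩ := hX
  obtain ⟨hY1, hY2, hY3, hY4⟩ := hY
  have e1 : X = X * A * Y := by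
    calc X = X * A * X := hX2.symm
    _ = X * (A * X)ᴴ := by rw [hX3, Matrix.mul_assoc]
    _ = X * ((A * Y) * (A * X))ᴴ := by
        rw [show (A * Y) * (A * X) = A * X from by
          rw [← Matrix.mul_assoc, Matrix.mul_assoc A Y A, ← Matrix.mul_assoc A Y A, hY1]]
    _ = X * ((A * X)ᴴ * (A * Y)ᴴ) := by rw [conjTranspose_mul]
    _ = (X * (A * X)ᴴ) * (A * Y) := by rw [hY3, Matrix.mul_assoc]
    _ = (X * A * X) * (A * Y) := by rw [hX3]; simp only [Matrix.mul_assoc]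
    _ = X * (A * Y) := by rw [hX2]
    _ = X * A * Y := by rw [Matrix.mul_assoc]
  have e2 : Y = X * A * Y := by
    calc Y = Y * A * Y := hY2.symm
    _ = (Y * A)ᴴ * Y := by rw [hY4]
    _ = ((Y * A) * (X * A))ᴴ * Y := by
        rw [show (Y * A) * (X * A) = Y * A from by
          rw [Matrix.mul_assoc Y A (X * A), ← Matrix.mul_assoc A X A, hX1]]
    _ = (X * A)ᴴ * ((Y * A)ᴴ * Y) := by rw [conjTranspose_mul, Matrix.mul_assoc]
    _ = (X * A) * ((Y * A) * Y) := by rw [hX4, hY4]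
    _ = X * A * Y := by rw [hY2]
  exact e1.trans e2.symm

lemma sub_mem_orth {q r : ℕ} {C : Matrix (Fin q) (Fin r) 𝕜} {Cd : Matrix (Fin r) (Fin q) 𝕜}
    (h1 : IsMoorePenrose C Cd) (x : EuclideanSpace 𝕜 (Fin q)) :
    x - Matrix.toEuclideanLin (C * Cd) x ∈ (LinearMap.range (Matrix.toEuclideanLin C))ᗮ := by
  have hC : Cᴴ * (C * Cd) = Cᴴ := by
    calc Cᴴ * (C * Cd) = Cᴴ * (C * Cd)ᴴ := by rw [h1.2.2.1]
    _ = ((C * Cd) * C)ᴴ := (conjTranspose_mul _ _).symm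
    _ = Cᴴ := by rw [h1.1]
  have h0 : Matrix.toEuclideanLin Cᴴ (x - Matrix.toEuclideanLin (C * Cd) x) = 0 := by
    rw [map_sub, ← teLin_mul, hC, sub_self]
  rw [Submodule.mem_orthogonal]
  rintro _ ⟨z, rfl⟩
  rw [← LinearMap.adjoint_inner_right, ← Matrix.toEuclideanLin_conjTranspose_eq_adjoint, h0,
    inner_zero_right]

lemma proj_eq {q r : ℕ} {C : Matrix (Fin q) (Fin r) 𝕜} {Cd : Matrix (Fin r) (Fin q) 𝕜}
    (h1 : IsMoorePenrose C Cd) :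
    projMat (LinearMap.range (Matrix.toEuclideanLin C)) = C * Cd := by
  apply Matrix.toEuclideanLin.injective
  refine LinearMap.ext fun x => ?_
  have : Matrix.toEuclideanLin (projMat (LinearMap.range (Matrix.toEuclideanLin C))) x
      = (orthogonalProjection (LinearMap.range (Matrix.toEuclideanLin C)) x : _) := by
    simp [projMat]
  rw [this]
  refine eq_starProjection_of_mem_orthogonal (K := LinearMap.range (Matrix.toEuclideanLin C)) ?_ (sub_mem_orth h1 x)
  rw [teLin_mul]
  exact LinearMap.mem_range_self _ _

lemma ker_sub {p q r : ℕ} {B : Matrix (Fin p) (Fin q) 𝕜} {C : Matrix (Fin q) (Fin r) 𝕜}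
    {Cd : Matrix (Fin r) (Fin q) 𝕜}
    (hV : LinearMap.range (Matrix.toEuclideanLin C) ≤
      (LinearMap.ker (Matrix.toEuclideanLin B))ᗮ)
    (h1 : IsMoorePenrose C Cd) (y : EuclideanSpace 𝕜 (Fin q))
    (hy : Matrix.toEuclideanLin (B * (C * Cd)) y = 0) :
    y ∈ (LinearMap.range (Matrix.toEuclideanLin C))ᗮ := by
  have hmem : Matrix.toEuclideanLin (C * Cd) y ∈ LinearMap.range (Matrix.toEuclideanLin C) := by
    rw [teLin_mul]; exact LinearMap.mem_range_self _ _
  have hker : Matrix.toEuclideanLin (C * Cd) y ∈ LinearMap.ker (Matrix.toEuclideanLin B) := by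
    rw [LinearMap.mem_ker, ← teLin_mul]; exact hy
  have h0 : Matrix.toEuclideanLin (C * Cd) y = 0 := by
    have h2 := hV hmem
    rw [Submodule.mem_orthogonal] at h2
    exact inner_self_eq_zero.mp (h2 _ hker)
  have := sub_mem_orth h1 y
  rwa [h0, sub_zero] at this

lemma key3 {p q r : ℕ} {B : Matrix (Fin p) (Fin q) 𝕜} {C : Matrix (Fin q) (Fin r) 𝕜}
    {Cd : Matrix (Fin r) (Fin q) 𝕜} {BPd : Matrix (Fin q) (Fin p) 𝕜}
    (hV : LinearMap.range (Matrix.toEuclideanLin C) ≤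
      (LinearMap.ker (Matrix.toEuclideanLin B))ᗮ)
    (h1 : IsMoorePenrose C Cd) (h2 : IsMoorePenrose (B * (C * Cd)) BPd) :
    BPd * (B * (C * Cd)) = C * Cd := by
  apply Matrix.toEuclideanLin.injective
  refine LinearMap.ext fun x => ?_
  have hmem1 : Matrix.toEuclideanLin (BPd * (B * (C * Cd))) x
      ∈ LinearMap.range (Matrix.toEuclideanLin C) := by
    have hM : BPd * (B * (C * Cd)) = C * (Cd * (Bᴴ * BPdᴴ)) := by
      rw [← h2.2.2.2, conjTranspose_mul, conjTranspose_mul, h1.2.2.1]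
      simp only [Matrix.mul_assoc]
    rw [hM, teLin_mul]
    exact LinearMap.mem_range_self _ _
  have horth1 : x - Matrix.toEuclideanLin (BPd * (B * (C * Cd))) x
      ∈ (LinearMap.range (Matrix.toEuclideanLin C))ᗮ := by
    refine ker_sub hV h1 _ ?_
    rw [map_sub, ← teLin_mul]
    rw [show (B * (C * Cd)) * (BPd * (B * (C * Cd))) = B * (C * Cd) from by
      rw [← Matrix.mul_assoc, h2.1]]
    rw [sub_self]
  have hmem2 : Matrix.toEuclideanLin (C * Cd) x
      ∈ LinearMap.range (Matrix.toEuclideanLin C) := by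
    rw [teLin_mul]; exact LinearMap.mem_range_self _ _
  have e1 := eq_starProjection_of_mem_orthogonal hmem1 horth1
  have e2 := eq_starProjection_of_mem_orthogonal hmem2 (sub_mem_orth h1 x)
  exact e1.symm.trans e2

theorem stmt7 {p q r : ℕ} (B : Matrix (Fin p) (Fin q) 𝕜) (C : Matrix (Fin q) (Fin r) 𝕜)
    (hV : LinearMap.range (Matrix.toEuclideanLin C) ≤
      (LinearMap.ker (Matrix.toEuclideanLin B))ᗮ)
    (Cd : Matrix (Fin r) (Fin q) 𝕜) (BPd : Matrix (Fin q) (Fin p) 𝕜)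
    (BCd : Matrix (Fin r) (Fin p) 𝕜)
    (h1 : IsMoorePenrose C Cd)
    (h2 : IsMoorePenrose (B * projMat (LinearMap.range (Matrix.toEuclideanLin C))) BPd)
    (h3 : IsMoorePenrose (B * C) BCd) :
    BCd = Cd * BPd := by
  rw [proj_eq h1] at h2
  have k3 := key3 hV h1 h2
  have hQC : (B * (C * Cd)) * C = B * C := by rw [Matrix.mul_assoc, h1.1]
  have hA : (B * C) * (Cd * BPd) = (B * (C * Cd)) * BPd := by
    simp only [Matrix.mul_assoc]
  have hXA : (Cd * BPd) * (B * C) = Cd * C := by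
    have h4 : BPd * (B * C) = C := by
      rw [← hQC, ← Matrix.mul_assoc, k3, h1.1]
    rw [Matrix.mul_assoc, h4]
  refine mp_unique h3 ⟨?_, ?_, ?_, ?_⟩
  · rw [hA, ← hQC, ← Matrix.mul_assoc, h2.1, hQC]
  · rw [hXA, ← Matrix.mul_assoc, h1.2.1]
  · rw [hA]; exact h2.2.2.1
  · rw [hXA]; exact h1.2.2.2
end

section
/- Let A ∈ K^{m×n} with singular values σ_1 ≥ … ≥ σ_p (p = min(m,n)), let 1 ≤ h ≤ rank(A) with σ_h = σ_{h+1}. Define j = max{ 0 ≤ ℓ < h : σ_ℓ > σ_h } (with σ_0 = ∞) and k = max{ 1 ≤ ℓ ≤ rank(A) : σ_ℓ = σ_h }. Fix a SVD A = UΣV* and let U_ℓ = span of the first ℓ columns of U (U_0 = {0}). Then an h-dimensional subspace S' ⊆ K^m is a left dominant subspace for A if and only if there exists an (h−j)-dimensional subspace 𝒰 ⊆ U_k ∩ U_j^⊥ such that S' = U_j ⊕ 𝒰. -/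
open Matrix Submodule

variable {𝕜 : Type*} [RCLike 𝕜]

noncomputable def colSpan {m mm : ℕ} (U : Matrix (Fin m) (Fin mm) 𝕜) (ℓ : ℕ) :
    Submodule 𝕜 (EuclideanSpace 𝕜 (Fin m)) :=
  Submodule.span 𝕜 {x | ∃ i : Fin mm, (i : ℕ) < ℓ ∧ x = fun r => U r i}

def IsLeftDominant {m n : ℕ} (A : Matrix (Fin m) (Fin n) 𝕜) (σ : ℕ → ℝ) (h : ℕ)
    (S' : Submodule 𝕜 (EuclideanSpace 𝕜 (Fin m))) : Prop :=
  ∃ w : Fin h → EuclideanSpace 𝕜 (Fin m),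
    Orthonormal 𝕜 w ∧ Submodule.span 𝕜 (Set.range w) = S' ∧
    ∀ i : Fin h,
      Matrix.toEuclideanLin (A * Aᴴ) (w i) = (algebraMap ℝ 𝕜 (σ ((i : ℕ) + 1) ^ 2)) • w i

def IsRightDominant {m n : ℕ} (A : Matrix (Fin m) (Fin n) 𝕜) (σ : ℕ → ℝ) (h : ℕ)
    (S : Submodule 𝕜 (EuclideanSpace 𝕜 (Fin n))) : Prop :=
  ∃ z : Fin h → EuclideanSpace 𝕜 (Fin n),
    Orthonormal 𝕜 z ∧ Submodule.span 𝕜 (Set.range z) = S ∧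
    ∀ i : Fin h,
      Matrix.toEuclideanLin (Aᴴ * A) (z i) = (algebraMap ℝ 𝕜 (σ ((i : ℕ) + 1) ^ 2)) • z i

-- ===== auxiliary lemmas =====
section Aux

local notation "⟪" x ", " y "⟫" => @inner 𝕜 _ _ x y

lemma mem_orthogonal_span_iff' {E : Type*} [NormedAddCommGroup E] [InnerProductSpace 𝕜 E]
    (s : Set E) (x : E) :
    x ∈ (Submodule.span 𝕜 s)ᗮ ↔ ∀ v ∈ s, ⟪v, x⟫ = 0 := by
  rw [Submodule.mem_orthogonal]
  constructor
  · exact fun H v hv => H v (Submodule.subset_span hv)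
  · intro H u hu
    induction hu using Submodule.span_induction with
    | mem v hv => exact H v hv
    | zero => simp
    | add a b _ _ ha hb => rw [inner_add_left, ha, hb, add_zero]
    | smul c a _ ha => rw [inner_smul_left, ha, mul_zero]

lemma mem_span_onb_iff {ι : Type*} [Fintype ι] {E : Type*} [NormedAddCommGroup E]
    [InnerProductSpace 𝕜 E] (B : OrthonormalBasis ι 𝕜 E) (s : Set ι) (x : E) :
    x ∈ Submodule.span 𝕜 (B '' s) ↔ ∀ i ∉ s, B.repr x i = 0 := by
  classical
  constructor
  · intro hx i hi
    induction hx using Submodule.span_induction with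
    | mem v hv =>
      obtain ⟨i', hi', rfl⟩ := hv
      rw [B.repr_self, EuclideanSpace.single_apply]
      simp only [ite_eq_right_iff]
      intro hii; exact absurd (hii ▸ hi') hi
    | zero => simp
    | add a b _ _ ha hb => rw [map_add]; simp [ha, hb]
    | smul c a _ ha => rw [_root_.map_smul]; simp [ha]
  · intro hx
    have hsum : ∑ i ∈ Finset.univ.filter (· ∈ s), B.repr x i • B i = x := by
      conv_rhs => rw [← B.sum_repr x]
      apply Finset.sum_subset (Finset.filter_subset _ _)
      intro i _ hi
      have : B.repr x i = 0 := hx i (by simpa using hi)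
      simp [this]
    rw [← hsum]
    exact Submodule.sum_mem _ fun i hi =>
      Submodule.smul_mem _ _ (Submodule.subset_span ⟨i, by simpa using hi, rfl⟩)

lemma onb_diag_apply {ι : Type*} [Fintype ι] {E : Type*} [NormedAddCommGroup E]
    [InnerProductSpace 𝕜 E] (B : OrthonormalBasis ι 𝕜 E) (T : E →ₗ[𝕜] E) (d : ι → 𝕜)
    (hT : ∀ i, T (B i) = d i • B i) (x : E) :
    T x = ∑ i, (d i * B.repr x i) • B i := by
  conv_lhs => rw [← B.sum_repr x]
  rw [map_sum]
  refine Finset.sum_congr rfl fun i _ => ?_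
  rw [_root_.map_smul, hT, smul_smul, mul_comm]

lemma onb_diag_repr {ι : Type*} [Fintype ι] {E : Type*} [NormedAddCommGroup E]
    [InnerProductSpace 𝕜 E] (B : OrthonormalBasis ι 𝕜 E) (T : E →ₗ[𝕜] E) (d : ι → 𝕜)
    (hT : ∀ i, T (B i) = d i • B i) (x : E) (i : ι) :
    B.repr (T x) i = d i * B.repr x i := by
  rw [onb_diag_apply B T d hT x, B.repr_apply_apply,
    Orthonormal.inner_right_fintype B.orthonormal]

lemma eig_mem_span {ι : Type*} [Fintype ι] {E : Type*} [NormedAddCommGroup E]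
    [InnerProductSpace 𝕜 E] (B : OrthonormalBasis ι 𝕜 E) (T : E →ₗ[𝕜] E) (d : ι → 𝕜)
    (hT : ∀ i, T (B i) = d i • B i) (x : E) (c : 𝕜) (hx : T x = c • x) :
    x ∈ Submodule.span 𝕜 (B '' {i | d i = c}) := by
  rw [mem_span_onb_iff]
  intro i hi
  have h1 : d i * B.repr x i = c * B.repr x i := by
    rw [← onb_diag_repr B T d hT x i, hx, _root_.map_smul]
    simp [smul_eq_mul]
  have h2 : (d i - c) * B.repr x i = 0 := by linear_combination h1
  rcases mul_eq_zero.mp h2 with h | h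
  · exact absurd (sub_eq_zero.mp h) hi
  · exact h

lemma diag_apply_of_mem_span {ι : Type*} [Fintype ι] {E : Type*} [NormedAddCommGroup E]
    [InnerProductSpace 𝕜 E] (B : OrthonormalBasis ι 𝕜 E) (T : E →ₗ[𝕜] E) (d : ι → 𝕜)
    (hT : ∀ i, T (B i) = d i • B i) (s : Set ι) (c : 𝕜) (hs : ∀ i ∈ s, d i = c) (x : E)
    (hx : x ∈ Submodule.span 𝕜 (B '' s)) : T x = c • x := by
  classical
  rw [onb_diag_apply B T d hT x]
  conv_rhs => rw [← B.sum_repr x, Finset.smul_sum]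
  refine Finset.sum_congr rfl fun i _ => ?_
  rw [smul_smul]
  by_cases hi : i ∈ s
  · rw [hs i hi]
  · rw [(mem_span_onb_iff B s x).mp hx i hi]; ring_nf

open scoped ComplexOrder in
lemma singVal_nonneg' {m n : ℕ} (A : Matrix (Fin m) (Fin n) 𝕜) (i : Fin n) :
    0 ≤ singVal A i := Real.sqrt_nonneg _

lemma singVal_antitone' {m n : ℕ} (A : Matrix (Fin m) (Fin n) 𝕜) {a b : Fin n} (hab : a ≤ b) :
    singVal A b ≤ singVal A a := by
  apply Real.sqrt_le_sqrt
  exact Tuple.monotone_sort (Matrix.isHermitian_conjTranspose_mul_self A).eigenvalues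
    (Fin.rev_le_rev.mpr hab)

open scoped ComplexOrder in
lemma singVal_rank_iff' {m n : ℕ} (A : Matrix (Fin m) (Fin n) 𝕜) (i : Fin n) :
    (i : ℕ) < A.rank ↔ singVal A i ≠ 0 := by
  classical
  set H := Matrix.isHermitian_conjTranspose_mul_self A with hH
  set ev := H.eigenvalues with hev
  have hnn : ∀ i, 0 ≤ ev i := (Matrix.posSemidef_conjTranspose_mul_self A).eigenvalues_nonneg
  have hzero : ∀ i : Fin n, singVal A i = 0 ↔ ev (Tuple.sort ev i.rev) = 0 := by
    intro i
    rw [singVal, Real.sqrt_eq_zero (hnn _)]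
  set F : Finset (Fin n) := Finset.univ.filter (fun i => singVal A i ≠ 0) with hF
  have hcard : F.card = A.rank := by
    rw [← Matrix.rank_conjTranspose_mul_self A, H.rank_eq_card_non_zero_eigs,
      Fintype.card_subtype]
    apply Finset.card_bij (fun i _ => Tuple.sort ev i.rev)
    · intro a ha
      simp only [hF, Finset.mem_filter, Finset.mem_univ, true_and] at ha ⊢
      exact fun hc => ha ((hzero a).mpr hc)
    · intro a _ b _ hab
      have := (Tuple.sort ev).injective hab
      exact Fin.rev_injective this
    · intro y hy
      refine ⟨((Tuple.sort ev).symm y).rev, ?_, ?_⟩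
      · simp only [hF, Finset.mem_filter, Finset.mem_univ, true_and] at hy ⊢
        simp only [Ne, hzero, Fin.rev_rev, Equiv.apply_symm_apply]
        simpa using hy
      · rw [Fin.rev_rev, Equiv.apply_symm_apply]
  have hdc : ∀ a b : Fin n, a ≤ b → b ∈ F → a ∈ F := by
    intro a b hab hb
    simp only [hF, Finset.mem_filter, Finset.mem_univ, true_and] at hb ⊢
    have h1 : 0 < singVal A b := lt_of_le_of_ne (singVal_nonneg' A b) (Ne.symm hb)
    have h2 := singVal_antitone' A hab
    intro hc; rw [hc] at h2; linarith
  have key : i ∈ F ↔ (i : ℕ) < F.card := by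
    constructor
    · intro hi
      have hsub : Finset.Iic i ⊆ F := fun a ha => hdc a i (Finset.mem_Iic.mp ha) hi
      have := Finset.card_le_card hsub
      rw [Fin.card_Iic] at this
      omega
    · intro hi
      by_contra hni
      have hsub : F ⊆ Finset.Iio i := by
        intro b hb
        rw [Finset.mem_Iio]
        by_contra hbi
        exact hni (hdc i b (le_of_not_gt hbi) hb)
      have := Finset.card_le_card hsub
      rw [Fin.card_Iio] at this
      omega
  rw [hcard] at key
  rw [← key]
  simp [hF]

lemma sig_mul_conj' {m n : ℕ} (σ : ℕ → ℝ) (Sig : Matrix (Fin m) (Fin n) 𝕜)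
    (hSig : ∀ (i : Fin m) (jj : Fin n),
      Sig i jj = if (i : ℕ) = (jj : ℕ) then algebraMap ℝ 𝕜 (σ ((i : ℕ) + 1)) else 0) :
    Sig * Sigᴴ = Matrix.diagonal
      (fun i : Fin m => if (i : ℕ) < n then algebraMap ℝ 𝕜 (σ ((i : ℕ) + 1) ^ 2) else 0) := by
  ext x y
  rw [Matrix.mul_apply]
  simp only [conjTranspose_apply, hSig]
  by_cases hxy : x = y
  · subst hxy
    rw [Matrix.diagonal_apply_eq]
    by_cases hxn : (x : ℕ) < n
    · rw [if_pos hxn, Finset.sum_eq_single ⟨(x : ℕ), hxn⟩]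
      · simp only [if_pos rfl, if_true]
        simp [RCLike.algebraMap_eq_ofReal, RCLike.conj_ofReal, sq]
      · intro jj _ hjj
        have : (x : ℕ) ≠ (jj : ℕ) := fun hc => hjj (by ext; simp [← hc])
        rw [if_neg this]
        simp
      · simp
    · rw [if_neg hxn]
      apply Finset.sum_eq_zero
      intro jj _
      have : (x : ℕ) ≠ (jj : ℕ) := by omega
      rw [if_neg this]
      simp
  · rw [Matrix.diagonal_apply_ne _ hxy]
    apply Finset.sum_eq_zero
    intro jj _
    have hv : (x : ℕ) ≠ (y : ℕ) := fun hc => hxy (Fin.ext hc)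
    by_cases h1 : (x : ℕ) = (jj : ℕ)
    · have : ¬ ((y : ℕ) = (jj : ℕ)) := fun h2 => hv (h1.trans h2.symm)
      rw [if_neg this]
      simp
    · rw [if_neg h1]
      simp

lemma col_eigen' {m n : ℕ} (A : Matrix (Fin m) (Fin n) 𝕜) (σ : ℕ → ℝ)
    (U : Matrix (Fin m) (Fin m) 𝕜) (V : Matrix (Fin n) (Fin n) 𝕜)
    (Sig : Matrix (Fin m) (Fin n) 𝕜)
    (hU : Uᴴ * U = 1) (hVu : Vᴴ * V = 1)
    (hSig : ∀ (i : Fin m) (jj : Fin n),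
      Sig i jj = if (i : ℕ) = (jj : ℕ) then algebraMap ℝ 𝕜 (σ ((i : ℕ) + 1)) else 0)
    (hA : A = U * Sig * Vᴴ) :
    ∀ i : Fin m, Matrix.toEuclideanLin (A * Aᴴ) ((WithLp.toLp 2 (fun r => U r i) : EuclideanSpace 𝕜 (Fin m)))
      = (if (i : ℕ) < n then algebraMap ℝ 𝕜 (σ ((i : ℕ) + 1) ^ 2) else 0)
        • ((WithLp.toLp 2 (fun r => U r i) : EuclideanSpace 𝕜 (Fin m))) := by
  have hSS := sig_mul_conj' σ Sig hSig
  set D' : Fin m → 𝕜 :=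
    fun i => if (i : ℕ) < n then algebraMap ℝ 𝕜 (σ ((i : ℕ) + 1) ^ 2) else 0 with hD'
  have hAAH : (A * Aᴴ) * U = U * Matrix.diagonal D' := by
    rw [hA]
    simp only [Matrix.conjTranspose_mul, Matrix.conjTranspose_conjTranspose]
    calc (U * Sig * Vᴴ) * (V * (Sigᴴ * Uᴴ)) * U
        = U * Sig * (Vᴴ * V) * (Sigᴴ * (Uᴴ * U)) := by
          simp only [Matrix.mul_assoc]
      _ = U * (Sig * Sigᴴ) := by rw [hU, hVu, Matrix.mul_one, Matrix.mul_one, Matrix.mul_assoc]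
      _ = U * Matrix.diagonal D' := by rw [hSS]
  intro i
  ext r
  have h1 : (Matrix.toEuclideanLin (A * Aᴴ) ((WithLp.toLp 2 (fun r => U r i) : EuclideanSpace 𝕜 (Fin m)))) r
      = ((A * Aᴴ) * U) r i := by
    rw [Matrix.toEuclideanLin_apply]
    simp [Matrix.mulVec, Matrix.mul_apply, dotProduct]
  rw [h1, hAAH, Matrix.mul_diagonal]
  exact mul_comm _ _

end Aux

set_option maxHeartbeats 2000000 in
theorem stmt13 {m n : ℕ} (A : Matrix (Fin m) (Fin n) 𝕜) (σ : ℕ → ℝ)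
    (hσ : ∀ i : Fin n, σ ((i : ℕ) + 1) = singVal A i)
    (h j k : ℕ) (hh1 : 1 ≤ h) (hh2 : h ≤ A.rank)
    (hgap : σ h = σ (h + 1))
    (hj1 : j < h) (hj2 : j = 0 ∨ σ h < σ j)
    (hj3 : ∀ ℓ, ℓ < h → σ h < σ ℓ → ℓ ≤ j)
    (hk1 : 1 ≤ k) (hk2 : k ≤ A.rank) (hk3 : σ k = σ h)
    (hk4 : ∀ ℓ, 1 ≤ ℓ → ℓ ≤ A.rank → σ ℓ = σ h → ℓ ≤ k)
    (U : Matrix (Fin m) (Fin m) 𝕜) (V : Matrix (Fin n) (Fin n) 𝕜)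
    (Sig : Matrix (Fin m) (Fin n) 𝕜)
    (hU : Uᴴ * U = 1) (hVu : Vᴴ * V = 1)
    (hSig : ∀ (i : Fin m) (jj : Fin n),
      Sig i jj = if (i : ℕ) = (jj : ℕ) then algebraMap ℝ 𝕜 (σ ((i : ℕ) + 1)) else 0)
    (hA : A = U * Sig * Vᴴ)
    (S' : Submodule 𝕜 (EuclideanSpace 𝕜 (Fin m))) (hS' : Module.finrank 𝕜 S' = h) :
    IsLeftDominant A σ h S' ↔
      ∃ 𝒰 : Submodule 𝕜 (EuclideanSpace 𝕜 (Fin m)),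
        Module.finrank 𝕜 𝒰 = h - j ∧ 𝒰 ≤ colSpan U k ⊓ (colSpan U j)ᗮ ∧
        S' = colSpan U j ⊔ 𝒰 := by
  classical
  have hrn : A.rank ≤ n := le_trans (Matrix.rank_le_card_width A) (by simp)
  have hrm : A.rank ≤ m := le_trans (Matrix.rank_le_card_height A) (by simp)
  have hhn : h ≤ n := hh2.trans hrn
  have hhm : h ≤ m := hh2.trans hrm
  have hkn : k ≤ n := hk2.trans hrn
  have hkm : k ≤ m := hk2.trans hrm
  have hjm : j ≤ m := (le_of_lt hj1).trans hhm
  have hhk : h ≤ k := hk4 h hh1 hh2 rfl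
  have hm0 : 0 < m := by omega
  -- basic facts about σ
  have hσ' : ∀ ℓ, (h1 : 1 ≤ ℓ) → (h2 : ℓ ≤ n) → σ ℓ = singVal A ⟨ℓ - 1, by omega⟩ := by
    intro ℓ h1 h2
    have := hσ ⟨ℓ - 1, by omega⟩
    simpa [Nat.sub_add_cancel h1] using this
  have σanti : ∀ a b, 1 ≤ a → a ≤ b → b ≤ n → σ b ≤ σ a := by
    intro a b h1 h2 h3
    rw [hσ' a h1 (h2.trans h3), hσ' b (h1.trans h2) h3]
    exact singVal_antitone' A (Fin.mk_le_mk.mpr (by omega))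
  have σpos : ∀ ℓ, 1 ≤ ℓ → ℓ ≤ A.rank → 0 < σ ℓ := by
    intro ℓ h1 h2
    rw [hσ' ℓ h1 (h2.trans hrn)]
    refine lt_of_le_of_ne (singVal_nonneg' A _) (Ne.symm ?_)
    exact (singVal_rank_iff' A ⟨ℓ - 1, by omega⟩).mp (show ℓ - 1 < A.rank by omega)
  have σzero : ∀ ℓ, A.rank < ℓ → ℓ ≤ n → σ ℓ = 0 := by
    intro ℓ h1 h2
    rw [hσ' ℓ (by omega) h2]
    by_contra hc
    have h3 : ((⟨ℓ - 1, by omega⟩ : Fin n) : ℕ) < A.rank := (singVal_rank_iff' A _).mpr hc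
    have h4 : ℓ - 1 < A.rank := h3
    omega
  have σnn : ∀ ℓ, 1 ≤ ℓ → ℓ ≤ n → 0 ≤ σ ℓ := fun ℓ h1 h2 => by
    rw [hσ' ℓ h1 h2]; exact singVal_nonneg' A _
  have σh0 : 0 < σ h := σpos h hh1 hh2
  have e1 : ∀ ℓ, 1 ≤ ℓ → ℓ ≤ j → σ h < σ ℓ := by
    intro ℓ h1 h2
    rcases hj2 with hj0 | hjlt
    · omega
    · have : σ j ≤ σ ℓ := σanti ℓ j h1 h2 (by omega)
      linarith
  have e2 : ∀ ℓ, j < ℓ → ℓ ≤ k → σ ℓ = σ h := by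
    intro ℓ h1 h2
    by_cases hlh : ℓ < h
    · have hnlt : ¬ σ h < σ ℓ := fun hc => by have := hj3 ℓ hlh hc; omega
      have hle : σ h ≤ σ ℓ := σanti ℓ h (by omega) (by omega) hhn
      linarith [lt_or_eq_of_le hle]
    · by_cases hleh : ℓ = h
      · rw [hleh]
      · have h3 : σ ℓ ≤ σ h := σanti h ℓ hh1 (by omega) (by omega)
        have h4 : σ k ≤ σ ℓ := σanti ℓ k (by omega) h2 hkn
        linarith [hk3.le, hk3.ge]
  have e3 : ∀ ℓ, k < ℓ → ℓ ≤ n → σ ℓ < σ h := by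
    intro ℓ h1 h2
    by_cases hlr : ℓ ≤ A.rank
    · have h3 : σ ℓ ≤ σ h := σanti h ℓ hh1 (by omega) h2
      rcases lt_or_eq_of_le h3 with h4 | h4
      · exact h4
      · exact absurd (hk4 ℓ (by omega) hlr h4) (by omega)
    · rw [σzero ℓ (by omega) h2]; exact σh0
  -- the orthonormal basis of columns of U
  set L : ℝ := σ h ^ 2 with hL
  set u : Fin m → EuclideanSpace 𝕜 (Fin m) := fun i => WithLp.toLp 2 (fun r => U r i) with hu
  have huon : Orthonormal 𝕜 u := by
    rw [orthonormal_iff_ite]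
    intro a b
    have h1 := congrFun (congrFun hU a) b
    rw [Matrix.mul_apply] at h1
    simp only [Matrix.conjTranspose_apply] at h1
    have h2 : (inner 𝕜 (u a) (u b) : 𝕜) = ∑ x, star (U x a) * U x b := by
      simp [hu, PiLp.inner_apply, RCLike.inner_apply]
      exact Finset.sum_congr rfl fun _ _ => mul_comm _ _
    rw [h2, h1, Matrix.one_apply]
  have hcardm : Fintype.card (Fin m) = Module.finrank 𝕜 (EuclideanSpace 𝕜 (Fin m)) := by simp
  haveI : Nonempty (Fin m) := ⟨⟨0, hm0⟩⟩
  have hspan : ⊤ ≤ Submodule.span 𝕜 (Set.range u) := by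
    have hb := (basisOfLinearIndependentOfCardEqFinrank huon.linearIndependent hcardm).span_eq
    rw [coe_basisOfLinearIndependentOfCardEqFinrank] at hb
    rw [hb]
  set B : OrthonormalBasis (Fin m) 𝕜 (EuclideanSpace 𝕜 (Fin m)) :=
    OrthonormalBasis.mk huon hspan with hB
  have hBu : ∀ i, B i = u i := fun i => by rw [hB, OrthonormalBasis.coe_mk]
  have himg : ∀ s : Set (Fin m), B '' s = u '' s := fun s =>
    Set.image_congr fun i _ => hBu i
  set T := Matrix.toEuclideanLin (A * Aᴴ) with hT
  set D : Fin m → ℝ := fun i => if (i : ℕ) < n then σ ((i : ℕ) + 1) ^ 2 else 0 with hD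
  set d : Fin m → 𝕜 := fun i => algebraMap ℝ 𝕜 (D i) with hd
  have hTu : ∀ i, T (B i) = d i • B i := by
    intro i
    rw [hBu i, hT]
    have hc := col_eigen' A σ U V Sig hU hVu hSig hA i
    simp only [hu]
    rw [hc]
    congr 1
    simp [hd, hD, apply_ite (algebraMap ℝ 𝕜)]
  have t1 : ∀ i : Fin m, (i : ℕ) < j → L < D i := by
    intro i hi
    have hin : (i : ℕ) < n := by omega
    simp only [hD]
    rw [if_pos hin]
    exact pow_lt_pow_left₀ (e1 ((i : ℕ) + 1) (by omega) (by omega)) σh0.le (by norm_num)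
  have t2 : ∀ i : Fin m, j ≤ (i : ℕ) → (i : ℕ) < k → D i = L := by
    intro i h1 h2
    have hin : (i : ℕ) < n := by omega
    simp only [hD]
    rw [if_pos hin, e2 ((i : ℕ) + 1) (by omega) (by omega)]
  have t3 : ∀ i : Fin m, k ≤ (i : ℕ) → D i < L := by
    intro i h1
    simp only [hD]
    by_cases hin : (i : ℕ) < n
    · rw [if_pos hin]
      exact pow_lt_pow_left₀ (e3 ((i : ℕ) + 1) (by omega) (by omega))
        (σnn ((i : ℕ) + 1) (by omega) (by omega)) (by norm_num)
    · rw [if_neg hin]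
      exact pow_pos σh0 2
  have hinj : Function.Injective (algebraMap ℝ 𝕜) := (algebraMap ℝ 𝕜).injective
  set aL : 𝕜 := algebraMap ℝ 𝕜 L with haL
  set sL : Set (Fin m) := {i | j ≤ (i : ℕ) ∧ (i : ℕ) < k} with hsL
  have hdiff : ∀ i : Fin m, d i = aL ↔ i ∈ sL := by
    intro i
    constructor
    · intro hdi
      have hDi : D i = L := hinj hdi
      have h1 : ¬ (i : ℕ) < j := fun hc => absurd hDi (ne_of_gt (t1 i hc))
      have h2 : ¬ k ≤ (i : ℕ) := fun hc => absurd hDi (ne_of_lt (t3 i hc))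
      exact ⟨by omega, by omega⟩
    · intro hi
      simp only [hd, haL, t2 i hi.1 hi.2]
  have hcol : ∀ ℓ : ℕ, colSpan U ℓ = Submodule.span 𝕜 (u '' {i : Fin m | (i : ℕ) < ℓ}) := by
    intro ℓ
    unfold colSpan
    congr 1
    ext x
    simp only [Set.mem_setOf_eq, Set.mem_image, hu]
    constructor
    · rintro ⟨i, hi, hx⟩; exact ⟨i, hi, by rw [← hx]⟩
    · rintro ⟨i, hi, hx⟩; exact ⟨i, hi, by rw [← hx]⟩
  have hcolB : ∀ ℓ : ℕ, colSpan U ℓ = Submodule.span 𝕜 (B '' {i : Fin m | (i : ℕ) < ℓ}) :=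
    fun ℓ => by rw [hcol, ← himg]
  have hdim : ∀ ℓ : ℕ, ℓ ≤ m → Module.finrank 𝕜 (colSpan U ℓ) = ℓ := by
    intro ℓ hℓ
    have hr : Set.range (u ∘ Fin.castLE hℓ) = u '' {i : Fin m | (i : ℕ) < ℓ} := by
      ext x
      constructor
      · rintro ⟨t, rfl⟩; exact ⟨Fin.castLE hℓ t, t.isLt, rfl⟩
      · rintro ⟨i, hi, rfl⟩; exact ⟨⟨(i : ℕ), hi⟩, congrArg u (Fin.ext rfl)⟩
    rw [hcol ℓ, ← hr,
      finrank_span_eq_card ((huon.comp _ (Fin.castLE_injective hℓ)).linearIndependent)]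
    simp
  have hUkj : colSpan U k ⊓ (colSpan U j)ᗮ = Submodule.span 𝕜 (B '' sL) := by
    apply le_antisymm
    · rintro x hx
      obtain ⟨hx1, hx2⟩ := Submodule.mem_inf.mp hx
      rw [hcolB k, mem_span_onb_iff] at hx1
      rw [mem_span_onb_iff]
      intro i hi
      simp only [hsL, Set.mem_setOf_eq, not_and, not_lt] at hi
      by_cases hik : (i : ℕ) < k
      · have hij : (i : ℕ) < j := by
          by_contra hc
          push_neg at hc
          have := hi hc
          omega
        rw [B.repr_apply_apply, hBu i]
        have hmem : u i ∈ colSpan U j := by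
          rw [hcol j]; exact Submodule.subset_span ⟨i, hij, rfl⟩
        exact Submodule.inner_right_of_mem_orthogonal hmem hx2
      · exact hx1 i (by simpa using hik)
    · refine le_inf ?_ ?_
      · rw [hcolB k]
        exact Submodule.span_mono (Set.image_mono fun i hi => hi.2)
      · rw [Submodule.span_le]
        rintro x ⟨i, hi, rfl⟩
        rw [SetLike.mem_coe, hcol j, mem_orthogonal_span_iff']
        rintro v ⟨i0, hi0, rfl⟩
        rw [hBu i]
        have horth := orthonormal_iff_ite.mp huon i0 i
        rw [horth, if_neg]
        intro hc
        subst hc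
        simp only [Set.mem_setOf_eq] at hi0
        simp only [hsL, Set.mem_setOf_eq] at hi
        omega
  constructor
  · rintro ⟨w, hwon, hwspan, hweig⟩
    simp only [← hT] at hweig
    have hwmem : ∀ i : Fin h, j ≤ (i : ℕ) → w i ∈ Submodule.span 𝕜 (B '' sL) := by
      intro i hi
      have heig : T (w i) = aL • w i := by
        rw [hweig i, haL, hL, e2 ((i : ℕ) + 1) (by omega) (by omega)]
      have hmem := eig_mem_span B T d hTu (w i) aL heig
      have hset : {i' : Fin m | d i' = aL} = sL := Set.ext fun i' => hdiff i'
      rwa [hset] at hmem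
    have hwj : ∀ i : Fin h, (i : ℕ) < j → w i ∈ colSpan U j := by
      intro i hi
      have hmem := eig_mem_span B T d hTu (w i) _ (hweig i)
      rw [hcolB j]
      refine Submodule.span_mono (Set.image_mono ?_) hmem
      intro i' hi'
      simp only [Set.mem_setOf_eq] at hi' ⊢
      have hDi' : D i' = σ ((i : ℕ) + 1) ^ 2 := hinj hi'
      have hgt : L < D i' := by
        rw [hDi']
        exact pow_lt_pow_left₀ (e1 ((i : ℕ) + 1) (by omega) (by omega)) σh0.le (by norm_num)
      by_contra hc
      push_neg at hc
      by_cases hik : (i' : ℕ) < k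
      · rw [t2 i' hc hik] at hgt; exact lt_irrefl _ hgt
      · have := t3 i' (by omega); linarith
    have hjh : j ≤ h := le_of_lt hj1
    set eup : Fin (h - j) → Fin h := fun t => ⟨j + (t : ℕ), by omega⟩ with heup
    have heinj : Function.Injective eup := by
      intro a b hab
      have : j + (a : ℕ) = j + (b : ℕ) := congrArg Fin.val hab
      exact Fin.ext (by omega)
    refine ⟨Submodule.span 𝕜 (Set.range (w ∘ eup)), ?_, ?_, ?_⟩
    · rw [finrank_span_eq_card ((hwon.comp eup heinj).linearIndependent)]
      simp
    · rw [hUkj, Submodule.span_le]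
      rintro x ⟨t, rfl⟩
      exact hwmem (eup t) (Nat.le_add_right j (t : ℕ))
    · rw [← hwspan]
      have hsplit : Set.range w
          = Set.range (w ∘ Fin.castLE hjh) ∪ Set.range (w ∘ eup) := by
        ext x
        constructor
        · rintro ⟨i, rfl⟩
          by_cases hij : (i : ℕ) < j
          · exact Or.inl ⟨⟨(i : ℕ), hij⟩, congrArg w (Fin.ext rfl)⟩
          · exact Or.inr ⟨⟨(i : ℕ) - j, by omega⟩, congrArg w (Fin.ext (by
              show j + ((i : ℕ) - j) = (i : ℕ); omega))⟩
        · rintro (⟨t, rfl⟩ | ⟨t, rfl⟩)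
          · exact ⟨_, rfl⟩
          · exact ⟨_, rfl⟩
      rw [hsplit, Submodule.span_union]
      have hWl : Submodule.span 𝕜 (Set.range (w ∘ Fin.castLE hjh)) = colSpan U j := by
        refine Submodule.eq_of_le_of_finrank_eq ?_ ?_
        · rw [Submodule.span_le]
          rintro x ⟨t, rfl⟩
          exact hwj (Fin.castLE hjh t) t.isLt
        · rw [finrank_span_eq_card ((hwon.comp _ (Fin.castLE_injective hjh)).linearIndependent),
            hdim j hjm]
          simp
      rw [hWl]
  · rintro ⟨𝒰, hU1, hU2, hU3⟩
    set bb : OrthonormalBasis (Fin (h - j)) 𝕜 𝒰 :=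
      (stdOrthonormalBasis 𝕜 𝒰).reindex (finCongr hU1) with hbb
    set w : Fin h → EuclideanSpace 𝕜 (Fin m) := fun i =>
      if hij : (i : ℕ) < j then u ⟨(i : ℕ), by omega⟩
      else (bb ⟨(i : ℕ) - j, by omega⟩ : EuclideanSpace 𝕜 (Fin m)) with hw
    have hwlt : ∀ (i : Fin h), (hij : (i : ℕ) < j) → w i = u ⟨(i : ℕ), by omega⟩ := by
      intro i hij
      simp only [hw]
      rw [dif_pos hij]
    have hwge : ∀ (i : Fin h), (hij : ¬ (i : ℕ) < j) →
        w i = (bb ⟨(i : ℕ) - j, by omega⟩ : EuclideanSpace 𝕜 (Fin m)) := by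
      intro i hij
      simp only [hw]
      rw [dif_neg hij]
    have hbbmem : ∀ t, (bb t : EuclideanSpace 𝕜 (Fin m)) ∈ Submodule.span 𝕜 (B '' sL) := by
      intro t
      have h1 := hU2 (bb t).2
      rwa [hUkj] at h1
    have hbborth : ∀ t, (bb t : EuclideanSpace 𝕜 (Fin m)) ∈ (colSpan U j)ᗮ :=
      fun t => (Submodule.mem_inf.mp (hU2 (bb t).2)).2
    have humem : ∀ (i : Fin m), (i : ℕ) < j → u i ∈ colSpan U j := by
      intro i hi
      rw [hcol j]
      exact Submodule.subset_span ⟨i, hi, rfl⟩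
    have hbbite : ∀ s t : Fin (h - j),
        (inner 𝕜 ((bb s : EuclideanSpace 𝕜 (Fin m))) ((bb t : EuclideanSpace 𝕜 (Fin m))) : 𝕜)
          = if s = t then (1 : 𝕜) else 0 :=
      fun s t => orthonormal_iff_ite.mp bb.orthonormal s t
    have hworth : Orthonormal 𝕜 w := by
      rw [orthonormal_iff_ite]
      intro a c
      by_cases hac : a = c
      · subst hac
        rw [if_pos rfl]
        by_cases ha : (a : ℕ) < j
        · rw [hwlt a ha]
          have := orthonormal_iff_ite.mp huon ⟨(a : ℕ), by omega⟩ ⟨(a : ℕ), by omega⟩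
          rw [this, if_pos rfl]
        · rw [hwge a ha, hbbite, if_pos rfl]
      · rw [if_neg hac]
        by_cases ha : (a : ℕ) < j <;> by_cases hc : (c : ℕ) < j
        · rw [hwlt a ha, hwlt c hc]
          have := orthonormal_iff_ite.mp huon ⟨(a : ℕ), by omega⟩ ⟨(c : ℕ), by omega⟩
          rw [this, if_neg]
          intro hcc
          simp only [Fin.mk.injEq] at hcc
          exact hac (Fin.ext hcc)
        · rw [hwlt a ha, hwge c hc]
          exact Submodule.inner_right_of_mem_orthogonal (humem ⟨(a : ℕ), by omega⟩ ha) (hbborth _)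
        · rw [hwge a ha, hwlt c hc]
          exact Submodule.inner_left_of_mem_orthogonal (humem ⟨(c : ℕ), by omega⟩ hc) (hbborth _)
        · rw [hwge a ha, hwge c hc, hbbite, if_neg]
          intro hcc
          simp only [Fin.mk.injEq] at hcc
          exact hac (Fin.ext (by omega))
    refine ⟨w, hworth, ?_, ?_⟩
    · rw [hU3]
      have hr : Set.range w
          = u '' {i : Fin m | (i : ℕ) < j} ∪ (Subtype.val '' Set.range bb) := by
        ext x
        constructor
        · rintro ⟨i, rfl⟩
          by_cases hij : (i : ℕ) < j
          · exact Or.inl ⟨⟨(i : ℕ), by omega⟩, hij, (hwlt i hij).symm⟩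
          · exact Or.inr ⟨bb ⟨(i : ℕ) - j, by omega⟩, ⟨_, rfl⟩, (hwge i hij).symm⟩
        · rintro (⟨i0, hi0, rfl⟩ | ⟨y, ⟨t, rfl⟩, rfl⟩)
          · simp only [Set.mem_setOf_eq] at hi0
            refine ⟨⟨(i0 : ℕ), by omega⟩, ?_⟩
            rw [hwlt _ hi0]
          · refine ⟨⟨j + (t : ℕ), by omega⟩, ?_⟩
            rw [hwge _ (by simp)]
            exact congrArg (fun s => (bb s : EuclideanSpace 𝕜 (Fin m)))
              (Fin.ext (by show j + (t : ℕ) - j = (t : ℕ); omega))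
      rw [hr, Submodule.span_union]
      have h2 : Submodule.span 𝕜 (Subtype.val '' Set.range bb) = 𝒰 := by
        rw [← Submodule.coe_subtype, Submodule.span_image]
        have h3 : Submodule.span 𝕜 (Set.range bb) = ⊤ := by
          have h4 := bb.toBasis.span_eq
          rwa [OrthonormalBasis.coe_toBasis] at h4
        rw [h3, Submodule.map_subtype_top]
      rw [h2, ← hcol j]
    · intro i
      simp only [← hT]
      by_cases hij : (i : ℕ) < j
      · rw [hwlt i hij]
        have h1 := hTu ⟨(i : ℕ), by omega⟩
        rw [hBu] at h1
        rw [h1]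
        congr 1
        simp only [hd, hD]
        rw [if_pos (show (i : ℕ) < n by omega)]
      · rw [hwge i hij]
        have hx := hbbmem ⟨(i : ℕ) - j, by omega⟩
        have h2 : ∀ i' ∈ sL, d i' = aL := fun i' hi' => (hdiff i').mpr hi'
        have h3 := diag_apply_of_mem_span B T d hTu sL aL h2 _ hx
        rw [h3]
        congr 1
        rw [haL, hL, e2 ((i : ℕ) + 1) (by omega) (by omega)]
end

section
/- Let A ∈ K^{m×n}, let Φ ∈ K^{m×r}, and let P ∈ K^{m×m} be an orthogonal projection. Then ‖(I − Φ Φ†) P‖ ≤ ‖P − Φ B‖ for every B ∈ K^{r×m}, in both the spectral and Frobenius norms, where Φ† is the Moore–Penrose pseudoinverse of Φ. -/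
open Matrix Submodule

variable {𝕜 : Type*} [RCLike 𝕜]

lemma myContract {n : ℕ} (Q : Matrix (Fin n) (Fin n) 𝕜) (h1 : Qᴴ = Q) (h2 : Q * Q = Q)
    (x : EuclideanSpace 𝕜 (Fin n)) : ‖Matrix.toEuclideanLin Q x‖ ≤ ‖x‖ := by
  have hsym : (Matrix.toEuclideanLin Q).IsSymmetric :=
    Matrix.isHermitian_iff_isSymmetric.mp h1
  set T := Matrix.toEuclideanLin Q with hT
  have hid : T (T x) = T x := by
    rw [hT]
    simp only [Matrix.toEuclideanLin_apply, WithLp.ofLp_toLp]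
    have := Matrix.mulVec_mulVec ((WithLp.equiv 2 (Fin n → 𝕜)) x) Q Q
    rw [h2] at this
    exact congrArg _ this
  have h3 : ‖T x‖ ^ 2 = RCLike.re (inner 𝕜 (T x) (T x)) := by
    rw [inner_self_eq_norm_sq]
  have h4 : (inner 𝕜 (T x) (T x)) = inner 𝕜 x (T x) := by
    rw [hsym x (T x), hid]
  have h6 : RCLike.re (inner 𝕜 x (T x)) ≤ ‖x‖ * ‖T x‖ :=
    le_trans (RCLike.re_le_norm _) (norm_inner_le_norm x (T x))
  have h7 : ‖T x‖ ^ 2 ≤ ‖x‖ * ‖T x‖ := by rw [h3, h4]; exact h6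
  rcases eq_or_lt_of_le (norm_nonneg (T x)) with h | h
  · rw [← h]; exact norm_nonneg x
  · nlinarith

lemma myMulApply {m n p : ℕ} (A : Matrix (Fin m) (Fin n) 𝕜) (B : Matrix (Fin n) (Fin p) 𝕜)
    (x : EuclideanSpace 𝕜 (Fin p)) :
    Matrix.toEuclideanLin (A * B) x = Matrix.toEuclideanLin A (Matrix.toEuclideanLin B x) := by
  simp only [Matrix.toEuclideanLin_apply, Equiv.apply_symm_apply, Matrix.mulVec_mulVec]

lemma myNormSq {n : ℕ} (x : EuclideanSpace 𝕜 (Fin n)) : ‖x‖ ^ 2 = ∑ i, ‖x i‖ ^ 2 := by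
  rw [EuclideanSpace.norm_eq, Real.sq_sqrt]
  positivity

theorem stmt17 {m r : ℕ} (Φ : Matrix (Fin m) (Fin r) 𝕜) (Φd : Matrix (Fin r) (Fin m) 𝕜)
    (hΦ : IsMoorePenrose Φ Φd) (P : Matrix (Fin m) (Fin m) 𝕜)
    (hP1 : Pᴴ = P) (hP2 : P * P = P) (B : Matrix (Fin r) (Fin m) 𝕜) :
    specNorm ((1 - Φ * Φd) * P) ≤ specNorm (P - Φ * B) ∧
    frobNorm ((1 - Φ * Φd) * P) ≤ frobNorm (P - Φ * B) := by
  obtain ⟨hA1, hA2, hA3, hA4⟩ := hΦ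
  set Q : Matrix (Fin m) (Fin m) 𝕜 := 1 - Φ * Φd with hQ
  have hQ1 : Qᴴ = Q := by
    rw [hQ, Matrix.conjTranspose_sub, Matrix.conjTranspose_one, hA3]
  have hQ2 : Q * Q = Q := by
    have hAA : (Φ * Φd) * (Φ * Φd) = Φ * Φd := by
      rw [← Matrix.mul_assoc, hA1]
    rw [hQ]
    calc (1 - Φ * Φd) * (1 - Φ * Φd)
        = 1 - Φ * Φd - Φ * Φd + (Φ * Φd) * (Φ * Φd) := by noncomm_ring
      _ = 1 - Φ * Φd := by rw [hAA]; noncomm_ring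
  have hQΦ : Q * Φ = 0 := by
    rw [hQ, Matrix.sub_mul, Matrix.one_mul, hA1, sub_self]
  have key : Q * P = Q * (P - Φ * B) := by
    rw [Matrix.mul_sub, ← Matrix.mul_assoc, hQΦ, Matrix.zero_mul, sub_zero]
  rw [key]
  set M := P - Φ * B with hM
  constructor
  · -- spectral norm
    unfold specNorm
    apply ContinuousLinearMap.opNorm_le_bound _ (norm_nonneg _)
    intro x
    have h1 : (LinearMap.toContinuousLinearMap (Matrix.toEuclideanLin (Q * M))) x
        = Matrix.toEuclideanLin Q (Matrix.toEuclideanLin M x) := myMulApply Q M x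
    rw [h1]
    calc ‖Matrix.toEuclideanLin Q (Matrix.toEuclideanLin M x)‖
        ≤ ‖Matrix.toEuclideanLin M x‖ := myContract Q hQ1 hQ2 _
      _ = ‖(LinearMap.toContinuousLinearMap (Matrix.toEuclideanLin M)) x‖ := rfl
      _ ≤ ‖LinearMap.toContinuousLinearMap (Matrix.toEuclideanLin M)‖ * ‖x‖ :=
          ContinuousLinearMap.le_opNorm _ x
  · -- Frobenius norm
    unfold frobNorm
    apply Real.sqrt_le_sqrt
    have col : ∀ j : Fin m, ∑ i, ‖(Q * M) i j‖ ^ 2 ≤ ∑ i, ‖M i j‖ ^ 2 := by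
      intro j
      set v : EuclideanSpace 𝕜 (Fin m) := (WithLp.equiv 2 (Fin m → 𝕜)).symm (fun k => M k j)
        with hv
      have hvapp : ∀ i, v i = M i j := fun i => rfl
      have hQv : ∀ i, (Q * M) i j = (Matrix.toEuclideanLin Q v) i := by
        intro i
        simp only [hv, Matrix.toEuclideanLin_apply, Equiv.apply_symm_apply,
          WithLp.equiv_symm_apply, WithLp.ofLp_toLp, Matrix.mulVec, Matrix.mul_apply, dotProduct]
      calc ∑ i, ‖(Q * M) i j‖ ^ 2 = ∑ i, ‖(Matrix.toEuclideanLin Q v) i‖ ^ 2 := by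
            simp_rw [hQv]
        _ = ‖Matrix.toEuclideanLin Q v‖ ^ 2 := (myNormSq _).symm
        _ ≤ ‖v‖ ^ 2 := by
            have := myContract Q hQ1 hQ2 v
            nlinarith [norm_nonneg (Matrix.toEuclideanLin Q v), norm_nonneg v]
        _ = ∑ i, ‖v i‖ ^ 2 := myNormSq _
        _ = ∑ i, ‖M i j‖ ^ 2 := by simp_rw [hvapp]
    calc ∑ i, ∑ j, ‖(Q * M) i j‖ ^ 2 = ∑ j, ∑ i, ‖(Q * M) i j‖ ^ 2 := Finset.sum_comm
      _ ≤ ∑ j, ∑ i, ‖M i j‖ ^ 2 := Finset.sum_le_sum fun j _ => col j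
      _ = ∑ i, ∑ j, ‖M i j‖ ^ 2 := Finset.sum_comm
end
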